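/- arXiv:2109.00959 — 5 statements merged into one kernel-verified Lean document; each statement's English description precedes it below -/
import Mathlib

section
/- Let W^{(1)}, …, W^{(p)} ∈ ℂ^{n×n}, b ∈ ℂ^n, and let X ⊂ ℂ^n be a bounded set. Then there exist bias vectors c^{(1)}, …, c^{(p)} ∈ ℂ^n such that for all x ∈ X: ρ(W^{(p)} ⋯ W^{(1)} x + b) = φ_{W^{(p)},c^{(p)}} ∘ ⋯ ∘ φ_{W^{(1)},c^{(1)}}(x), where φ_{W,c}(x) = ρ(Wx + c) and ρ is the complex ReLU ρ(z) = max(0, Re z) + i·max(0, Im z) applied coordinatewise. -/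
open scoped BigOperators

/-- The complex ReLU applied coordinatewise:
    `ρ(z) = max(0, Re z) + i·max(0, Im z)`. -/
noncomputable def crelu {ι : Type*} (v : ι → ℂ) : ι → ℂ :=
  fun i => (max 0 (v i).re : ℝ) + (max 0 (v i).im : ℝ) * Complex.I

lemma crelu_of_nonneg {ι : Type*} (v : ι → ℂ)
    (h : ∀ i, 0 ≤ (v i).re ∧ 0 ≤ (v i).im) : crelu v = v := by
  funext i
  simp [crelu, max_eq_right (h i).1, max_eq_right (h i).2, Complex.re_add_im]

lemma mulVec_abs_bound (n : ℕ) (M : Matrix (Fin n) (Fin n) ℂ) (x : Fin n → ℂ) (R : ℝ)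
    (hx : ∀ i, ‖x i‖ ≤ R) (i : Fin n) :
    ‖M.mulVec x i‖ ≤ (∑ a, ∑ j, ‖M a j‖) * max R 0 := by
  have h1 : ‖M.mulVec x i‖ ≤ ∑ j, ‖M i j‖ * max R 0 := by
    refine le_trans (norm_sum_le Finset.univ fun j => M i j * x j) (Finset.sum_le_sum fun j _ => ?_)
    rw [norm_mul]
    exact mul_le_mul_of_nonneg_left ((hx j).trans (le_max_left _ _))
      (norm_nonneg _)
  refine h1.trans ?_
  rw [← Finset.sum_mul]
  refine mul_le_mul_of_nonneg_right ?_ (le_max_right _ _)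
  exact Finset.single_le_sum (f := fun a => ∑ j, ‖M a j‖)
    (fun a _ => Finset.sum_nonneg fun j _ => norm_nonneg _) (Finset.mem_univ i)

theorem aux_net : ∀ p : ℕ, 0 < p → ∀ (n : ℕ) (W : Fin p → Matrix (Fin n) (Fin n) ℂ)
    (b : Fin n → ℂ) (X : Set (Fin n → ℂ)),
    (∃ R : ℝ, ∀ x ∈ X, ∀ i, ‖x i‖ ≤ R) →
    ∃ c : Fin p → (Fin n → ℂ), ∀ x ∈ X,
      crelu (((List.ofFn W).reverse.prod).mulVec x + b) =
        (List.ofFn (fun i : Fin p => fun v : Fin n → ℂ =>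
          crelu ((W i).mulVec v + c i))).foldl (fun v f => f v) x := by
  intro p
  induction p with
  | zero => omega
  | succ m ih =>
    intro _ n W b X hX
    obtain ⟨R, hR⟩ := hX
    by_cases hm : m = 0
    · subst hm
      refine ⟨fun _ => b, fun x hx => ?_⟩
      simp [List.ofFn_succ, Fin.val_eq_zero, Subsingleton.elim (0 : Fin 1)]
    · have hm' : 0 < m := Nat.pos_of_ne_zero hm
      set W' : Fin m → Matrix (Fin n) (Fin n) ℂ := fun i => W i.succ with hW'
      set P' : Matrix (Fin n) (Fin n) ℂ := (List.ofFn W').reverse.prod with hP'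
      set S : ℝ := ∑ a, ∑ j, ‖W 0 a j‖ with hS
      set t : ℝ := S * max R 0 with ht
      have hS0 : 0 ≤ S :=
        Finset.sum_nonneg fun a _ => Finset.sum_nonneg fun j _ => norm_nonneg _
      have ht0 : 0 ≤ t := mul_nonneg hS0 (le_max_right _ _)
      set c0 : Fin n → ℂ := fun _ => Complex.mk t t with hc0
      -- first layer acts as identity shift on X
      have hbound : ∀ x ∈ X, ∀ i, ‖(W 0).mulVec x i‖ ≤ t :=
        fun x hx i => mulVec_abs_bound n (W 0) x R (hR x hx) i
      have hyeq : ∀ x ∈ X, crelu ((W 0).mulVec x + c0) = (W 0).mulVec x + c0 := by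
        intro x hx
        refine crelu_of_nonneg _ fun i => ?_
        have h1 := hbound x hx i
        have hre : |((W 0).mulVec x i).re| ≤ t := (Complex.abs_re_le_norm _).trans h1
        have him : |((W 0).mulVec x i).im| ≤ t := (Complex.abs_im_le_norm _).trans h1
        constructor
        · have := neg_le_of_abs_le hre
          simp only [Pi.add_apply, Complex.add_re, hc0]
          linarith [this]
        · have := neg_le_of_abs_le him
          simp only [Pi.add_apply, Complex.add_im, hc0]
          linarith [this]
      set X' : Set (Fin n → ℂ) := (fun x => (W 0).mulVec x + c0) '' X with hX'
      have hX'bdd : ∃ R' : ℝ, ∀ y ∈ X', ∀ i, ‖y i‖ ≤ R' := by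
        refine ⟨3 * t, ?_⟩
        rintro y ⟨x, hx, rfl⟩ i
        have h1 := hbound x hx i
        have h2 : ‖c0 i‖ ≤ 2 * t := by
          refine (Complex.norm_le_abs_re_add_abs_im _).trans ?_
          simp [hc0, abs_of_nonneg ht0]; linarith
        calc ‖(W 0).mulVec x i + c0 i‖
            ≤ ‖(W 0).mulVec x i‖ + ‖c0 i‖ := norm_add_le _ _
          _ ≤ t + 2 * t := add_le_add h1 h2
          _ = 3 * t := by ring
      obtain ⟨c', hc'⟩ := ih hm' n W' (b - P'.mulVec c0) X' hX'bdd
      refine ⟨Fin.cons c0 c', fun x hx => ?_⟩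
      have hy : ((W 0).mulVec x + c0) ∈ X' := ⟨x, hx, rfl⟩
      have hprod : (List.ofFn W).reverse.prod = P' * W 0 := by
        rw [List.ofFn_succ, List.reverse_cons, List.prod_append, List.prod_cons,
          List.prod_nil, mul_one, hP', hW']
      have hlhs : (List.ofFn W).reverse.prod.mulVec x + b =
          P'.mulVec ((W 0).mulVec x + c0) + (b - P'.mulVec c0) := by
        rw [hprod, ← Matrix.mulVec_mulVec, Matrix.mulVec_add]
        funext i
        simp [Pi.add_apply, Pi.sub_apply]
      rw [hlhs, hc' _ hy, List.ofFn_succ, List.foldl_cons]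
      simp only [Fin.cons_zero, Fin.cons_succ]
      rw [hyeq x hx]

/-- A composition of affine maps intertwined with complex ReLUs can simulate a single
    linear map `W⁽ᵖ⁾ ⋯ W⁽¹⁾` followed by a bias and a ReLU on a bounded set, for a
    suitable choice of biases `c⁽¹⁾, …, c⁽ᵖ⁾`. -/
theorem product_to_relu_network (n p : ℕ) (hp : 0 < p)
    (W : Fin p → Matrix (Fin n) (Fin n) ℂ) (b : Fin n → ℂ) (X : Set (Fin n → ℂ))
    (hX : ∃ R : ℝ, ∀ x ∈ X, ∀ i, ‖x i‖ ≤ R) :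
    ∃ c : Fin p → (Fin n → ℂ), ∀ x ∈ X,
      crelu (((List.ofFn W).reverse.prod).mulVec x + b) =
        (List.ofFn (fun i : Fin p => fun v : Fin n → ℂ =>
          crelu ((W i).mulVec v + c i))).foldl (fun v f => f v) x :=
  aux_net p hp n W b X hX
end

section
/- Let x^{(0)} = y^{(0)} ∈ ℂ^n and define recursively x^{(i)} = ρ(W^{(i)} x^{(i-1)} + b^{(i)}) and y^{(i)} = ρ(W̃^{(i)} y^{(i-1)} + b^{(i)}), where W̃^{(i)} is the rank-k SVD truncation of W^{(i)}. Let σ_j^{(max)} = max_i σ_j(W^{(i)}) and let R ≥ ‖x^{(i)}‖_2 for all i. If σ_1^{(max)} = 1, then ‖x^{(p)} − y^{(p)}‖_2 ≤ p·R·σ_{k+1}^{(max)}. If σ_1^{(max)} ≠ 1, then ‖x^{(p)} − y^{(p)}‖_2 ≤ ((σ_1^{(max)})^p − 1)·R·σ_{k+1}^{(max)} / (σ_1^{(max)} − 1). -/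
open scoped BigOperators

/-- Euclidean norm of a complex vector. -/
noncomputable def vnorm {ι : Type*} [Fintype ι] (v : ι → ℂ) : ℝ :=
  Real.sqrt (∑ i, ‖v i‖ ^ 2)


lemma vnorm_mono {ι : Type*} [Fintype ι] {u v : ι → ℂ}
    (h : ∀ i, ‖u i‖ ≤ ‖v i‖) : vnorm u ≤ vnorm v := by
  apply Real.sqrt_le_sqrt
  apply Finset.sum_le_sum
  intro i _
  exact pow_le_pow_left₀ (norm_nonneg _) (h i) 2

lemma vnorm_eq {ι : Type*} [Fintype ι] (v : ι → ℂ) :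
    vnorm v = ‖(WithLp.equiv 2 (ι → ℂ)).symm v‖ := by
  rw [EuclideanSpace.norm_eq, vnorm]
  simp

lemma vnorm_add_le {ι : Type*} [Fintype ι] (u v : ι → ℂ) :
    vnorm (u + v) ≤ vnorm u + vnorm v := by
  simp only [vnorm_eq]
  exact norm_add_le _ _

lemma vnorm_zero {ι : Type*} [Fintype ι] : vnorm (0 : ι → ℂ) = 0 := by
  simp [vnorm_eq]

lemma crelu_lip {ι : Type*} [Fintype ι] (u v : ι → ℂ) :
    vnorm (crelu u - crelu v) ≤ vnorm (u - v) := by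
  apply vnorm_mono
  intro i
  have h1 : ∀ z : ℂ, ‖z‖ = Real.sqrt (z.re ^ 2 + z.im ^ 2) := by
    intro z
    rw [Complex.norm_def, Complex.normSq_apply]; ring_nf
  rw [h1, h1]
  apply Real.sqrt_le_sqrt
  have hre : ((crelu u - crelu v) i).re = max 0 (u i).re - max 0 (v i).re := by
    simp [crelu]
  have him : ((crelu u - crelu v) i).im = max 0 (u i).im - max 0 (v i).im := by
    simp [crelu]
  rw [hre, him]
  have h2 : ∀ a b : ℝ, (max 0 a - max 0 b) ^ 2 ≤ (a - b) ^ 2 := by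
    intro a b
    have := abs_max_sub_max_le_abs a b 0
    rw [max_comm a 0, max_comm b 0] at this
    calc (max 0 a - max 0 b) ^ 2 = |max 0 a - max 0 b| ^ 2 := (sq_abs _).symm
      _ ≤ |a - b| ^ 2 := pow_le_pow_left₀ (abs_nonneg _) this 2
      _ = (a - b) ^ 2 := sq_abs _
  have := add_le_add (h2 (u i).re (v i).re) (h2 (u i).im (v i).im)
  simpa using this

/-- Error bound for a `p`-layer complex-ReLU network whose weight matrices are replaced
    by their rank-`k` SVD truncations `W̃⁽ⁱ⁾` (so `‖W̃⁽ⁱ⁾‖₂ ≤ σ₁ᵐᵃˣ` and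
    `‖W⁽ⁱ⁾ − W̃⁽ⁱ⁾‖₂ ≤ σ_{k+1}ᵐᵃˣ`), with `R` a bound on the norms of the intermediate
    outputs `x⁽ⁱ⁾`. -/
theorem network_low_rank_approximation (n p : ℕ)
    (W Wt : ℕ → Matrix (Fin n) (Fin n) ℂ) (b : ℕ → (Fin n → ℂ))
    (x y : ℕ → (Fin n → ℂ)) (σ1max σk1max R : ℝ)
    (h0 : x 0 = y 0)
    (hx : ∀ i, x (i + 1) = crelu ((W i).mulVec (x i) + b i))
    (hy : ∀ i, y (i + 1) = crelu ((Wt i).mulVec (y i) + b i))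
    (hop : ∀ i, ∀ v : Fin n → ℂ, vnorm ((Wt i).mulVec v) ≤ σ1max * vnorm v)
    (hdiff : ∀ i, ∀ v : Fin n → ℂ, vnorm ((W i - Wt i).mulVec v) ≤ σk1max * vnorm v)
    (hR : ∀ i, vnorm (x i) ≤ R)
    (hσ1 : 0 ≤ σ1max) (hσk : 0 ≤ σk1max) :
    (σ1max = 1 → vnorm (x p - y p) ≤ p * (R * σk1max)) ∧
    (σ1max ≠ 1 →
      vnorm (x p - y p) ≤ (σ1max ^ p - 1) * R * σk1max / (σ1max - 1)) := by
  have key : ∀ i, vnorm (x i - y i) ≤ R * σk1max * ∑ j ∈ Finset.range i, σ1max ^ j := by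
    intro i
    induction i with
    | zero => simp [h0, vnorm_zero]
    | succ i ih =>
      have step : vnorm (x (i + 1) - y (i + 1)) ≤
          σk1max * vnorm (x i) + σ1max * vnorm (x i - y i) := by
        rw [hx i, hy i]
        calc vnorm (crelu ((W i).mulVec (x i) + b i) - crelu ((Wt i).mulVec (y i) + b i))
            ≤ vnorm (((W i).mulVec (x i) + b i) - ((Wt i).mulVec (y i) + b i)) :=
              crelu_lip _ _
          _ = vnorm ((W i - Wt i).mulVec (x i) + (Wt i).mulVec (x i - y i)) := by
              congr 1
              rw [Matrix.sub_mulVec, Matrix.mulVec_sub]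
              abel
          _ ≤ vnorm ((W i - Wt i).mulVec (x i)) + vnorm ((Wt i).mulVec (x i - y i)) :=
              vnorm_add_le _ _
          _ ≤ σk1max * vnorm (x i) + σ1max * vnorm (x i - y i) :=
              add_le_add (hdiff i _) (hop i _)
      calc vnorm (x (i + 1) - y (i + 1))
          ≤ σk1max * vnorm (x i) + σ1max * vnorm (x i - y i) := step
        _ ≤ σk1max * R + σ1max * (R * σk1max * ∑ j ∈ Finset.range i, σ1max ^ j) := by
            gcongr
            exact hR i
        _ = R * σk1max * (σ1max * ∑ j ∈ Finset.range i, σ1max ^ j + 1) := by ring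
        _ = R * σk1max * ∑ j ∈ Finset.range (i + 1), σ1max ^ j := by
            rw [geom_sum_succ]
  constructor
  · intro h1
    have := key p
    simpa [h1, mul_comm] using this
  · intro h1
    have := key p
    rw [geom_sum_eq h1] at this
    calc vnorm (x p - y p) ≤ R * σk1max * ((σ1max ^ p - 1) / (σ1max - 1)) := this
      _ = (σ1max ^ p - 1) * R * σk1max / (σ1max - 1) := by ring
end

section
/- Let D(f₁), …, D(f_c) be n²×n² doubly-block Toeplitz matrices generated by trigonometric polynomials f₁, …, f_c: ℝ² → ℂ, and let M be the (c·n²)×n² matrix formed by vertically stacking them: M = [D(f₁)ᵀ, …, D(f_c)ᵀ]ᵀ. Then σ_1(M) ≤ sup_{(ω₁,ω₂) ∈ [0,2π]²} sqrt(Σ_{i=1}^{c} |f_i(ω₁,ω₂)|²). -/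
open scoped BigOperators

/-- Largest singular value (ℓ²→ℓ² operator norm) of a complex matrix. -/
noncomputable def sval1 {ι κ : Type*} [Fintype ι] [Fintype κ] (A : Matrix ι κ ℂ) : ℝ :=
  ⨆ v : {v : κ → ℂ // vnorm v ≤ 1}, vnorm (A.mulVec v.1)

/-- The `n² × n²` doubly-block Toeplitz matrix with real coefficients `d`. -/
def dbToep (n : ℕ) (d : ℤ → ℤ → ℝ) : Matrix (Fin n × Fin n) (Fin n × Fin n) ℂ :=
  Matrix.of fun p q => ((d ((q.1 : ℤ) - (p.1 : ℤ)) ((q.2 : ℤ) - (p.2 : ℤ)) : ℝ) : ℂ)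

/-- The generating multivariate trigonometric polynomial of `dbToep n d`. -/
noncomputable def genPoly (n : ℕ) (d : ℤ → ℤ → ℝ) (ω₁ ω₂ : ℝ) : ℂ :=
  ∑ h₁ ∈ Finset.Icc (-(n : ℤ) + 1) ((n : ℤ) - 1),
    ∑ h₂ ∈ Finset.Icc (-(n : ℤ) + 1) ((n : ℤ) - 1),
      ((d h₁ h₂ : ℝ) : ℂ) * Complex.exp (Complex.I * ((h₁ : ℂ) * (ω₁ : ℂ) + (h₂ : ℂ) * (ω₂ : ℂ)))


noncomputable def eN (N : ℕ) (k : ℤ) (j : Fin N) : ℂ :=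
  Complex.exp (2 * Real.pi * Complex.I * k * j / N)

lemma eN_add (N : ℕ) (k k' : ℤ) (j : Fin N) : eN N (k + k') j = eN N k j * eN N k' j := by
  rw [eN, eN, eN, ← Complex.exp_add]
  congr 1
  push_cast
  ring

lemma eN_sub (N : ℕ) (a b c : ℤ) (j : Fin N) :
    eN N (a + b - c) j = eN N a j * eN N b j * eN N (-c) j := by
  rw [sub_eq_add_neg, eN_add, eN_add]

lemma eN_sub2 (N : ℕ) (a c : ℤ) (j : Fin N) :
    eN N (a - c) j = eN N a j * eN N (-c) j := by
  rw [sub_eq_add_neg, eN_add]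

lemma eN_conj (N : ℕ) (k : ℤ) (j : Fin N) : (starRingEnd ℂ) (eN N k j) = eN N (-k) j := by
  rw [eN, eN, ← Complex.exp_conj]
  congr 1
  simp only [map_div₀, map_mul, map_ofNat, Complex.conj_I, Complex.conj_natCast,
    map_intCast, Complex.conj_ofReal]
  push_cast
  ring

lemma eN_sum (N : ℕ) (hN : 0 < N) (k : ℤ) (hk : |k| < N) :
    ∑ j : Fin N, eN N k j = if k = 0 then (N : ℂ) else 0 := by
  have hNne : (N : ℂ) ≠ 0 := Nat.cast_ne_zero.mpr hN.ne'
  set z : ℂ := Complex.exp (2 * Real.pi * Complex.I * k / N) with hz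
  have hterm : ∀ j : Fin N, eN N k j = z ^ (j : ℕ) := by
    intro j
    rw [eN, hz, ← Complex.exp_nat_mul]
    ring_nf
  rw [Finset.sum_congr rfl (fun j _ => hterm j), Fin.sum_univ_eq_sum_range]
  split_ifs with hk0
  · subst hk0
    simp [hz]
  · have hzN : z ^ N = 1 := by
      rw [hz, ← Complex.exp_nat_mul]
      have : (N : ℂ) * (2 * Real.pi * Complex.I * k / N) = k * (2 * Real.pi * Complex.I) := by
        field_simp
      rw [this, Complex.exp_int_mul_two_pi_mul_I]
    have hz1 : z ≠ 1 := by
      intro h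
      rw [hz, Complex.exp_eq_one_iff] at h
      obtain ⟨m, hm⟩ := h
      have h2 : (2 : ℂ) * Real.pi * Complex.I ≠ 0 := by
        simp [Real.pi_ne_zero, Complex.I_ne_zero]
      have hcast : (k : ℂ) = m * N := by
        field_simp at hm
        linear_combination hm
      have hkm : k = m * N := by exact_mod_cast hcast
      have hm0 : m ≠ 0 := by rintro rfl; simp at hkm; omega
      have : (N:ℤ) ≤ |k| := by
        rw [hkm, abs_mul, abs_of_nonneg (by positivity : (0:ℤ) ≤ (N:ℤ))]
        nlinarith [Int.one_le_abs hm0]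
      omega
    rw [geom_sum_eq hz1, hzN]
    simp

lemma sum_prod_fact {N : ℕ} (a b : Fin N → ℂ) :
    ∑ j : Fin N × Fin N, a j.1 * b j.2 = (∑ j₁, a j₁) * (∑ j₂, b j₂) := by
  rw [Finset.sum_mul_sum, Fintype.sum_prod_type]

/-- the grid point -/
noncomputable def omegaN (N : ℕ) (j : Fin N) : ℝ := 2 * Real.pi * j / N

lemma genPoly_omega (n N : ℕ) (d : ℤ → ℤ → ℝ) (j₁ j₂ : Fin N) :
    genPoly n d (omegaN N j₁) (omegaN N j₂)
      = ∑ h₁ ∈ Finset.Icc (-(n:ℤ)+1) ((n:ℤ)-1), ∑ h₂ ∈ Finset.Icc (-(n:ℤ)+1) ((n:ℤ)-1),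
          ((d h₁ h₂ : ℝ) : ℂ) * (eN N h₁ j₁ * eN N h₂ j₂) := by
  unfold genPoly
  refine Finset.sum_congr rfl fun h₁ _ => Finset.sum_congr rfl fun h₂ _ => ?_
  rw [eN, eN, ← Complex.exp_add]
  congr 1
  rw [omegaN, omegaN]
  push_cast
  ring

noncomputable def uvec (n N : ℕ) (p : Fin n × Fin n) : EuclideanSpace ℂ (Fin N × Fin N) :=
  WithLp.toLp 2 fun (j : Fin N × Fin N) => (N:ℂ)⁻¹ * (eN N (-(p.1:ℤ)) j.1 * eN N (-(p.2:ℤ)) j.2)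

noncomputable def Vfun (n N : ℕ) (v : Fin n × Fin n → ℂ) (j : Fin N × Fin N) : ℂ :=
  ∑ q : Fin n × Fin n, v q * (eN N (-(q.1:ℤ)) j.1 * eN N (-(q.2:ℤ)) j.2)

noncomputable def Ffun (n N : ℕ) (d : ℤ → ℤ → ℝ) (v : Fin n × Fin n → ℂ) :
    EuclideanSpace ℂ (Fin N × Fin N) :=
  WithLp.toLp 2 fun (j : Fin N × Fin N) => (N:ℂ)⁻¹ * (genPoly n d (omegaN N j.1) (omegaN N j.2) * Vfun n N v j)

-- orthonormality of uvec
lemma uvec_orthonormal (n N : ℕ) (hn : 0 < n) (hnN : n ≤ N) :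
    Orthonormal ℂ (uvec n N) := by
  have hN : 0 < N := lt_of_lt_of_le hn hnN
  rw [orthonormal_iff_ite]
  intro p p'
  rw [PiLp.inner_apply]
  simp only [RCLike.inner_apply', uvec, PiLp.toLp_apply, map_mul, map_inv₀, Complex.conj_natCast, eN_conj, neg_neg]
  have hterm : ∀ j : Fin N × Fin N,
      (N:ℂ)⁻¹ * (eN N (p.1:ℤ) j.1 * eN N (p.2:ℤ) j.2) *
        ((N:ℂ)⁻¹ * (eN N (-(p'.1:ℤ)) j.1 * eN N (-(p'.2:ℤ)) j.2))
      = ((N:ℂ)⁻¹ * (N:ℂ)⁻¹) *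
          ((fun j₁ => eN N ((p.1:ℤ) - p'.1) j₁) j.1 * (fun j₂ => eN N ((p.2:ℤ) - p'.2) j₂) j.2) := by
    intro j
    simp only
    rw [eN_sub2, eN_sub2]
    ring
  rw [Finset.sum_congr rfl fun j _ => hterm j, ← Finset.mul_sum, sum_prod_fact]
  have hb1 : |(p.1:ℤ) - p'.1| < (N:ℤ) := by
    rw [abs_lt]; have := p.1.isLt; have := p'.1.isLt; omega
  have hb2 : |(p.2:ℤ) - p'.2| < (N:ℤ) := by
    rw [abs_lt]; have := p.2.isLt; have := p'.2.isLt; omega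
  rw [eN_sum N hN _ hb1, eN_sum N hN _ hb2]
  have hNne : (N : ℂ) ≠ 0 := Nat.cast_ne_zero.mpr hN.ne'
  by_cases h : p = p'
  · subst h
    simp [hNne]
    field_simp
  · have : (p.1:ℤ) - p'.1 ≠ 0 ∨ (p.2:ℤ) - p'.2 ≠ 0 := by
      by_contra hc
      push_neg at hc
      apply h
      have h1 : p.1 = p'.1 := by have := hc.1; ext; omega
      have h2 : p.2 = p'.2 := by have := hc.2; ext; omega
      exact Prod.ext h1 h2
    rcases this with h1 | h2
    · rw [if_neg h1]
      simp [h]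
    · rw [if_neg h2]
      simp [h]

lemma sum_in3 {M : Type*} [AddCommMonoid M] {ι κ μ : Type*}
    (sa : Finset ι) (si : Finset κ) (sj : Finset μ) (f : ι → κ → μ → M) :
    ∑ a ∈ sa, ∑ i ∈ si, ∑ j ∈ sj, f a i j = ∑ i ∈ si, ∑ j ∈ sj, ∑ a ∈ sa, f a i j :=
  calc ∑ a ∈ sa, ∑ i ∈ si, ∑ j ∈ sj, f a i j
      = ∑ i ∈ si, ∑ a ∈ sa, ∑ j ∈ sj, f a i j := Finset.sum_comm
    _ = ∑ i ∈ si, ∑ j ∈ sj, ∑ a ∈ sa, f a i j :=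
        Finset.sum_congr rfl fun i _ => Finset.sum_comm

lemma sum_in4 {M : Type*} [AddCommMonoid M] {ι κ μ ν : Type*}
    (sa : Finset ι) (si : Finset κ) (sj : Finset μ) (sk : Finset ν) (f : ι → κ → μ → ν → M) :
    ∑ a ∈ sa, ∑ i ∈ si, ∑ j ∈ sj, ∑ k ∈ sk, f a i j k
      = ∑ i ∈ si, ∑ j ∈ sj, ∑ k ∈ sk, ∑ a ∈ sa, f a i j k :=
  calc ∑ a ∈ sa, ∑ i ∈ si, ∑ j ∈ sj, ∑ k ∈ sk, f a i j k
      = ∑ i ∈ si, ∑ a ∈ sa, ∑ j ∈ sj, ∑ k ∈ sk, f a i j k := Finset.sum_comm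
    _ = ∑ i ∈ si, ∑ j ∈ sj, ∑ a ∈ sa, ∑ k ∈ sk, f a i j k :=
        Finset.sum_congr rfl fun i _ => Finset.sum_comm
    _ = ∑ i ∈ si, ∑ j ∈ sj, ∑ k ∈ sk, ∑ a ∈ sa, f a i j k :=
        Finset.sum_congr rfl fun i _ => Finset.sum_congr rfl fun j _ => Finset.sum_comm

lemma sum_rot3 {M : Type*} [AddCommMonoid M] {ι κ μ : Type*}
    (si : Finset ι) (sj : Finset κ) (su : Finset μ) (f : ι → κ → μ → M) :
    ∑ i ∈ si, ∑ j ∈ sj, ∑ u ∈ su, f i j u = ∑ u ∈ su, ∑ i ∈ si, ∑ j ∈ sj, f i j u :=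
  calc ∑ i ∈ si, ∑ j ∈ sj, ∑ u ∈ su, f i j u
      = ∑ i ∈ si, ∑ u ∈ su, ∑ j ∈ sj, f i j u :=
        Finset.sum_congr rfl fun i _ => Finset.sum_comm
    _ = ∑ u ∈ su, ∑ i ∈ si, ∑ j ∈ sj, f i j u := Finset.sum_comm

lemma inner_uF (n N : ℕ) (hn : 0 < n) (hNn : 3 * n ≤ N)
    (d : ℤ → ℤ → ℝ) (v : Fin n × Fin n → ℂ) (p : Fin n × Fin n) :
    inner (𝕜 := ℂ) (uvec n N p) (Ffun n N d v)
      = ∑ q : Fin n × Fin n, ((d ((q.1:ℤ) - p.1) ((q.2:ℤ) - p.2) : ℝ) : ℂ) * v q := by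
  have hN : 0 < N := by omega
  have hNne : (N : ℂ) ≠ 0 := Nat.cast_ne_zero.mpr hN.ne'
  rw [PiLp.inner_apply]
  simp only [RCLike.inner_apply']
  have hstep1 : ∀ j : Fin N × Fin N,
      (starRingEnd ℂ) (uvec n N p j) * Ffun n N d v j
      = ∑ q : Fin n × Fin n,
          ∑ h₁ ∈ Finset.Icc (-(n:ℤ)+1) ((n:ℤ)-1), ∑ h₂ ∈ Finset.Icc (-(n:ℤ)+1) ((n:ℤ)-1),
          ((N:ℂ)⁻¹ * (N:ℂ)⁻¹ * ((d h₁ h₂ : ℝ) : ℂ) * v q) *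
            ((fun j₁ => eN N ((p.1:ℤ) + h₁ - q.1) j₁) j.1 *
             (fun j₂ => eN N ((p.2:ℤ) + h₂ - q.2) j₂) j.2) := by
    intro j
    have : (starRingEnd ℂ) (uvec n N p j) * Ffun n N d v j
        = ((∑ h₁ ∈ Finset.Icc (-(n:ℤ)+1) ((n:ℤ)-1), ∑ h₂ ∈ Finset.Icc (-(n:ℤ)+1) ((n:ℤ)-1),
            ((d h₁ h₂ : ℝ) : ℂ) * (eN N h₁ j.1 * eN N h₂ j.2)) *
           (∑ q : Fin n × Fin n, v q * (eN N (-(q.1:ℤ)) j.1 * eN N (-(q.2:ℤ)) j.2))) *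
          ((N:ℂ)⁻¹ * (N:ℂ)⁻¹ * (eN N ((p.1:ℤ)) j.1 * eN N ((p.2:ℤ)) j.2)) := by
      simp only [uvec, Ffun, PiLp.toLp_apply, genPoly_omega, Vfun, map_mul, map_inv₀, Complex.conj_natCast,
        eN_conj, neg_neg]
      ring
    rw [this]
    simp only [Finset.sum_mul, Finset.mul_sum]
    refine Finset.sum_congr rfl fun q _ => Finset.sum_congr rfl fun h₁ _ =>
      Finset.sum_congr rfl fun h₂ _ => ?_
    rw [eN_sub, eN_sub]
    ring
  rw [Finset.sum_congr rfl fun j _ => hstep1 j]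
  rw [sum_in4 Finset.univ Finset.univ (Finset.Icc (-(n:ℤ)+1) ((n:ℤ)-1))
      (Finset.Icc (-(n:ℤ)+1) ((n:ℤ)-1))]
  have hstep2 : ∀ (q : Fin n × Fin n), ∀ h₁ ∈ Finset.Icc (-(n:ℤ)+1) ((n:ℤ)-1),
      ∀ h₂ ∈ Finset.Icc (-(n:ℤ)+1) ((n:ℤ)-1),
      ∑ j : Fin N × Fin N,
        ((N:ℂ)⁻¹ * (N:ℂ)⁻¹ * ((d h₁ h₂ : ℝ) : ℂ) * v q) *
          ((fun j₁ => eN N ((p.1:ℤ) + h₁ - q.1) j₁) j.1 *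
           (fun j₂ => eN N ((p.2:ℤ) + h₂ - q.2) j₂) j.2)
      = ((N:ℂ)⁻¹ * (N:ℂ)⁻¹ * ((d h₁ h₂ : ℝ) : ℂ) * v q) *
          ((if (p.1:ℤ) + h₁ - q.1 = 0 then (N:ℂ) else 0) *
           (if (p.2:ℤ) + h₂ - q.2 = 0 then (N:ℂ) else 0)) := by
    intro q h₁ hm₁ h₂ hm₂
    rw [Finset.mem_Icc] at hm₁ hm₂
    rw [← Finset.mul_sum, sum_prod_fact]
    rw [eN_sum N hN _ (by rw [abs_lt]; have := p.1.isLt; have := q.1.isLt; omega),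
        eN_sum N hN _ (by rw [abs_lt]; have := p.2.isLt; have := q.2.isLt; omega)]
  rw [Finset.sum_congr rfl fun q _ => Finset.sum_congr rfl fun h₁ hm₁ =>
      Finset.sum_congr rfl fun h₂ hm₂ => hstep2 q h₁ hm₁ h₂ hm₂]
  refine Finset.sum_congr rfl fun q _ => ?_
  have hp1 := p.1.isLt; have hq1 := q.1.isLt; have hp2 := p.2.isLt; have hq2 := q.2.isLt
  rw [Finset.sum_eq_single_of_mem ((q.1:ℤ) - p.1)
      (Finset.mem_Icc.mpr (by constructor <;> omega))
      (fun b hb hne => Finset.sum_eq_zero fun h₂ _ => by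
        simp only [if_neg (show ¬((p.1:ℤ) + b - q.1 = 0) by omega), zero_mul, mul_zero])]
  rw [Finset.sum_eq_single_of_mem ((q.2:ℤ) - p.2)
      (Finset.mem_Icc.mpr (by constructor <;> omega))
      (fun b hb hne => by
        simp only [if_neg (show ¬((p.2:ℤ) + b - q.2 = 0) by omega), mul_zero, zero_mul])]
  rw [if_pos (by omega), if_pos (by omega)]
  field_simp

lemma Vfun_sq (n N : ℕ) (hn : 0 < n) (hnN : n ≤ N) (v : Fin n × Fin n → ℂ) :
    ∑ j : Fin N × Fin N, ‖Vfun n N v j‖ ^ 2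
      = (N:ℝ)^2 * ∑ q : Fin n × Fin n, ‖v q‖ ^ 2 := by
  have hN : 0 < N := lt_of_lt_of_le hn hnN
  have hNne : (N : ℂ) ≠ 0 := Nat.cast_ne_zero.mpr hN.ne'
  have key : ∑ j : Fin N × Fin N, Vfun n N v j * (starRingEnd ℂ) (Vfun n N v j)
      = (N:ℂ)^2 * ∑ q : Fin n × Fin n, v q * (starRingEnd ℂ) (v q) := by
    have hstep1 : ∀ j : Fin N × Fin N,
        Vfun n N v j * (starRingEnd ℂ) (Vfun n N v j)
        = ∑ q : Fin n × Fin n, ∑ q' : Fin n × Fin n,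
            (v q' * (starRingEnd ℂ) (v q)) *
              ((fun j₁ => eN N ((q.1:ℤ) - q'.1) j₁) j.1 *
               (fun j₂ => eN N ((q.2:ℤ) - q'.2) j₂) j.2) := by
      intro j
      simp only [Vfun, map_sum, map_mul, eN_conj, neg_neg]
      simp only [Finset.sum_mul, Finset.mul_sum]
      refine Finset.sum_congr rfl fun q _ => Finset.sum_congr rfl fun q' _ => ?_
      rw [eN_sub2, eN_sub2]
      ring
    rw [Finset.sum_congr rfl fun j _ => hstep1 j]
    rw [sum_in3 Finset.univ Finset.univ Finset.univ]
    have hstep2 : ∀ (q q' : Fin n × Fin n),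
        ∑ j : Fin N × Fin N,
          (v q' * (starRingEnd ℂ) (v q)) *
            ((fun j₁ => eN N ((q.1:ℤ) - q'.1) j₁) j.1 *
             (fun j₂ => eN N ((q.2:ℤ) - q'.2) j₂) j.2)
        = (v q' * (starRingEnd ℂ) (v q)) *
            ((if (q.1:ℤ) - q'.1 = 0 then (N:ℂ) else 0) *
             (if (q.2:ℤ) - q'.2 = 0 then (N:ℂ) else 0)) := by
      intro q q'
      rw [← Finset.mul_sum, sum_prod_fact]
      rw [eN_sum N hN _ (by rw [abs_lt]; have := q.1.isLt; have := q'.1.isLt; omega),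
          eN_sum N hN _ (by rw [abs_lt]; have := q.2.isLt; have := q'.2.isLt; omega)]
    rw [Finset.sum_congr rfl fun q _ => Finset.sum_congr rfl fun q' _ => hstep2 q q',
        Finset.mul_sum]
    refine Finset.sum_congr rfl fun q _ => ?_
    rw [Finset.sum_eq_single_of_mem q (Finset.mem_univ q) (fun b _ hb => ?_)]
    · rw [if_pos (by omega), if_pos (by omega)]
      ring
    · have : b.1 ≠ q.1 ∨ b.2 ≠ q.2 := by
        by_contra hc
        push_neg at hc
        exact hb (Prod.ext hc.1 hc.2)
      rcases this with h | h
      · have h' := Fin.val_ne_of_ne h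
        simp only [if_neg (show ¬((q.1:ℤ) - b.1 = 0) by omega), zero_mul, mul_zero]
      · have h' := Fin.val_ne_of_ne h
        simp only [if_neg (show ¬((q.2:ℤ) - b.2 = 0) by omega), zero_mul, mul_zero]
  have habs : ∀ z : ℂ, ((‖z‖ : ℝ) : ℂ) ^ 2 = z * (starRingEnd ℂ) z := by
    intro z
    rw [← Complex.ofReal_pow, Complex.sq_norm, Complex.mul_conj]
  rw [← Complex.ofReal_inj]
  push_cast
  simp only [habs]
  exact key

lemma main_bound (n c : ℕ) (hn : 0 < n) (d : Fin c → ℤ → ℤ → ℝ) (v : Fin n × Fin n → ℂ)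
    (hv : ∑ q : Fin n × Fin n, ‖v q‖ ^ 2 ≤ 1) :
    ∃ j : Fin (3*n) × Fin (3*n),
      ∑ r : Fin c × (Fin n × Fin n),
          ‖(Matrix.of fun (p : Fin c × (Fin n × Fin n)) (q : Fin n × Fin n) =>
            dbToep n (d p.1) p.2 q).mulVec v r‖ ^ 2
        ≤ ∑ i : Fin c,
            ‖genPoly n (d i) (omegaN (3*n) j.1) (omegaN (3*n) j.2)‖ ^ 2 := by
  set N := 3 * n with hNdef
  have hN : 0 < N := by omega
  obtain ⟨j₀, -, hj₀⟩ := Finset.exists_max_image (Finset.univ : Finset (Fin N × Fin N))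
      (fun j => ∑ i : Fin c, ‖genPoly n (d i) (omegaN N j.1) (omegaN N j.2)‖ ^ 2)
      ⟨(⟨0, hN⟩, ⟨0, hN⟩), Finset.mem_univ _⟩
  refine ⟨j₀, ?_⟩
  have hortho := uvec_orthonormal n N hn (by omega)
  have hmv : ∀ r : Fin c × (Fin n × Fin n),
      (Matrix.of fun (p : Fin c × (Fin n × Fin n)) (q : Fin n × Fin n) =>
        dbToep n (d p.1) p.2 q).mulVec v r
      = inner (𝕜 := ℂ) (uvec n N r.2) (Ffun n N (d r.1) v) := by
    intro r
    rw [inner_uF n N hn (by omega)]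
    simp [Matrix.mulVec, dotProduct, dbToep]
  have hFnorm : ∀ i : Fin c, ‖Ffun n N (d i) v‖ ^ 2
      = ∑ j : Fin N × Fin N, ((N:ℝ)⁻¹^2 *
          (‖genPoly n (d i) (omegaN N j.1) (omegaN N j.2)‖ ^ 2 *
           ‖Vfun n N v j‖ ^ 2)) := by
    intro i
    rw [EuclideanSpace.norm_eq, Real.sq_sqrt (Finset.sum_nonneg fun j _ => sq_nonneg _)]
    refine Finset.sum_congr rfl fun j _ => ?_
    have : Ffun n N (d i) v j
        = (N:ℂ)⁻¹ * (genPoly n (d i) (omegaN N j.1) (omegaN N j.2) * Vfun n N v j) := rfl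
    rw [show ‖Ffun n N (d i) v j‖ = ‖Ffun n N (d i) v j‖ from rfl, this]
    rw [norm_mul, norm_mul, norm_inv, Complex.norm_natCast]
    ring
  calc ∑ r : Fin c × (Fin n × Fin n),
        ‖(Matrix.of fun (p : Fin c × (Fin n × Fin n)) (q : Fin n × Fin n) =>
          dbToep n (d p.1) p.2 q).mulVec v r‖ ^ 2
      = ∑ i : Fin c, ∑ p : Fin n × Fin n,
          ‖inner (𝕜 := ℂ) (uvec n N p) (Ffun n N (d i) v)‖ ^ 2 := by
        rw [Fintype.sum_prod_type]
        exact Finset.sum_congr rfl fun i _ => Finset.sum_congr rfl fun p _ => by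
          rw [hmv (i, p)]
    _ ≤ ∑ i : Fin c, ‖Ffun n N (d i) v‖ ^ 2 :=
        Finset.sum_le_sum fun i _ => hortho.sum_inner_products_le _
    _ = (N:ℝ)⁻¹^2 * ∑ j : Fin N × Fin N,
          ((∑ i : Fin c, ‖genPoly n (d i) (omegaN N j.1) (omegaN N j.2)‖ ^ 2) *
            ‖Vfun n N v j‖ ^ 2) := by
        rw [Finset.sum_congr rfl fun i _ => hFnorm i, Finset.sum_comm, Finset.mul_sum]
        refine Finset.sum_congr rfl fun j _ => ?_
        rw [Finset.sum_mul, Finset.mul_sum]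
    _ ≤ (N:ℝ)⁻¹^2 * ∑ j : Fin N × Fin N,
          ((∑ i : Fin c, ‖genPoly n (d i) (omegaN N j₀.1) (omegaN N j₀.2)‖ ^ 2) *
            ‖Vfun n N v j‖ ^ 2) := by
        refine mul_le_mul_of_nonneg_left (Finset.sum_le_sum fun j _ => ?_) (by positivity)
        exact mul_le_mul_of_nonneg_right (hj₀ j (Finset.mem_univ j)) (sq_nonneg _)
    _ = (∑ i : Fin c, ‖genPoly n (d i) (omegaN N j₀.1) (omegaN N j₀.2)‖ ^ 2) *
          ((N:ℝ)⁻¹^2 * ∑ j : Fin N × Fin N, ‖Vfun n N v j‖ ^ 2) := by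
        rw [← Finset.mul_sum]
        ring
    _ = (∑ i : Fin c, ‖genPoly n (d i) (omegaN N j₀.1) (omegaN N j₀.2)‖ ^ 2) *
          ((N:ℝ)⁻¹^2 * ((N:ℝ)^2 * ∑ q : Fin n × Fin n, ‖v q‖ ^ 2)) := by
        rw [Vfun_sq n N hn (by omega)]
    _ ≤ ∑ i : Fin c, ‖genPoly n (d i) (omegaN N j₀.1) (omegaN N j₀.2)‖ ^ 2 := by
        have hNne : (N:ℝ) ≠ 0 := by positivity
        have h1 : (N:ℝ)⁻¹^2 * ((N:ℝ)^2 * ∑ q : Fin n × Fin n, ‖v q‖ ^ 2)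
            = ∑ q : Fin n × Fin n, ‖v q‖ ^ 2 := by
          field_simp
        rw [h1]
        have hG : 0 ≤ ∑ i : Fin c,
            ‖genPoly n (d i) (omegaN N j₀.1) (omegaN N j₀.2)‖ ^ 2 :=
          Finset.sum_nonneg fun i _ => sq_nonneg _
        nlinarith [hv]

/-- Bound on the largest singular value of vertically stacked doubly-block Toeplitz
    matrices `M = [D(f₁)ᵀ, …, D(f_c)ᵀ]ᵀ`:
    `σ₁(M) ≤ sup_{(ω₁,ω₂) ∈ [0,2π]²} √(∑ᵢ |fᵢ(ω₁,ω₂)|²)`. -/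
theorem stacked_doubly_block_toeplitz_sval_bound (n c : ℕ) (d : Fin c → ℤ → ℤ → ℝ) :
    sval1 (Matrix.of fun (p : Fin c × (Fin n × Fin n)) (q : Fin n × Fin n) =>
        dbToep n (d p.1) p.2 q) ≤
      ⨆ ω : Set.Icc (0 : ℝ) (2 * Real.pi) × Set.Icc (0 : ℝ) (2 * Real.pi),
        Real.sqrt (∑ i : Fin c, ‖genPoly n (d i) ω.1 ω.2‖ ^ 2) := by
  have hRHS0 : (0:ℝ) ≤ ⨆ ω : Set.Icc (0 : ℝ) (2 * Real.pi) × Set.Icc (0 : ℝ) (2 * Real.pi),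
      Real.sqrt (∑ i : Fin c, ‖genPoly n (d i) ω.1 ω.2‖ ^ 2) :=
    Real.iSup_nonneg fun ω => Real.sqrt_nonneg _
  rw [sval1]
  refine Real.iSup_le ?_ hRHS0
  rintro ⟨v, hv⟩
  rcases Nat.eq_zero_or_pos n with hn | hn
  · subst hn
    have hz : vnorm ((Matrix.of fun (p : Fin c × (Fin 0 × Fin 0)) (q : Fin 0 × Fin 0) =>
        dbToep 0 (d p.1) p.2 q).mulVec v) = 0 := by
      simp [vnorm]
    exact le_trans (le_of_eq hz) hRHS0
  · have h0 : (0:ℝ) ≤ ∑ q : Fin n × Fin n, ‖v q‖ ^ 2 :=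
      Finset.sum_nonneg fun _ _ => sq_nonneg _
    have hv' : ∑ q : Fin n × Fin n, ‖v q‖ ^ 2 ≤ 1 := by
      have h1 : Real.sqrt (∑ q : Fin n × Fin n, ‖v q‖ ^ 2) ≤ 1 := hv
      nlinarith [Real.sq_sqrt h0,
        Real.sqrt_nonneg (∑ q : Fin n × Fin n, ‖v q‖ ^ 2)]
    obtain ⟨j, hj⟩ := main_bound n c hn d v hv'
    have hsq : vnorm ((Matrix.of fun (p : Fin c × (Fin n × Fin n)) (q : Fin n × Fin n) =>
          dbToep n (d p.1) p.2 q).mulVec v)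
        ≤ Real.sqrt (∑ i : Fin c,
            ‖genPoly n (d i) (omegaN (3*n) j.1) (omegaN (3*n) j.2)‖ ^ 2) := by
      rw [vnorm]
      exact Real.sqrt_le_sqrt hj
    refine le_trans hsq ?_
    have hπ := Real.pi_pos
    have hmem : ∀ jj : Fin (3*n), omegaN (3*n) jj ∈ Set.Icc (0:ℝ) (2*Real.pi) := by
      intro jj
      constructor
      · rw [omegaN]; positivity
      · rw [omegaN, div_le_iff₀ (by positivity)]
        have h2 : (jj:ℝ) ≤ ((3*n : ℕ):ℝ) := by exact_mod_cast le_of_lt jj.isLt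
        nlinarith
    have hbdd : BddAbove (Set.range
        fun ω : Set.Icc (0:ℝ) (2*Real.pi) × Set.Icc (0:ℝ) (2*Real.pi) =>
          Real.sqrt (∑ i : Fin c, ‖genPoly n (d i) ω.1 ω.2‖ ^ 2)) := by
    

      refine ⟨Real.sqrt (∑ i : Fin c,
          ((∑ h₁ ∈ Finset.Icc (-(n:ℤ)+1) ((n:ℤ)-1), ∑ h₂ ∈ Finset.Icc (-(n:ℤ)+1) ((n:ℤ)-1),
            |d i h₁ h₂|) ^ 2)), ?_⟩
      rintro x ⟨ω, rfl⟩
      apply Real.sqrt_le_sqrt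
      refine Finset.sum_le_sum fun i _ => ?_
      refine pow_le_pow_left₀ (norm_nonneg _) ?_ 2
      calc ‖genPoly n (d i) ω.1 ω.2‖
          ≤ ∑ h₁ ∈ Finset.Icc (-(n:ℤ)+1) ((n:ℤ)-1),
              ‖∑ h₂ ∈ Finset.Icc (-(n:ℤ)+1) ((n:ℤ)-1),
                ((d i h₁ h₂ : ℝ) : ℂ) *
                  Complex.exp (Complex.I * ((h₁:ℂ) * ((ω.1:ℝ):ℂ) + (h₂:ℂ) * ((ω.2:ℝ):ℂ)))‖ :=
            norm_sum_le _ _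
        _ ≤ ∑ h₁ ∈ Finset.Icc (-(n:ℤ)+1) ((n:ℤ)-1), ∑ h₂ ∈ Finset.Icc (-(n:ℤ)+1) ((n:ℤ)-1),
              ‖((d i h₁ h₂ : ℝ) : ℂ) *
                Complex.exp (Complex.I * ((h₁:ℂ) * ((ω.1:ℝ):ℂ) + (h₂:ℂ) * ((ω.2:ℝ):ℂ)))‖ :=
            Finset.sum_le_sum fun h₁ _ => norm_sum_le _ _
        _ = ∑ h₁ ∈ Finset.Icc (-(n:ℤ)+1) ((n:ℤ)-1), ∑ h₂ ∈ Finset.Icc (-(n:ℤ)+1) ((n:ℤ)-1),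
              |d i h₁ h₂| := by
            refine Finset.sum_congr rfl fun h₁ _ => Finset.sum_congr rfl fun h₂ _ => ?_
            rw [norm_mul, Complex.norm_real, Real.norm_eq_abs, Complex.norm_exp]
            have hre : (Complex.I * ((h₁:ℂ) * ((ω.1:ℝ):ℂ) + (h₂:ℂ) * ((ω.2:ℝ):ℂ))).re = 0 := by
              simp
            rw [hre, Real.exp_zero, mul_one]
    exact le_ciSup hbdd (⟨⟨omegaN (3*n) j.1, hmem j.1⟩, ⟨omegaN (3*n) j.2, hmem j.2⟩⟩)
end

section
/- Let D(f_{i,j}) for i ∈ [cin], j ∈ [cout] be n²×n² doubly-block Toeplitz matrices generated by trigonometric polynomials f_{i,j}: ℝ² → ℂ, and let M be the (cin·n²)×(cout·n²) block matrix with block (i,j) equal to D(f_{i,j}). Then σ_1(M) ≤ sqrt(Σ_{j=1}^{cout} sup_{(ω₁,ω₂) ∈ [0,2π]²} Σ_{i=1}^{cin} |f_{i,j}(ω₁,ω₂)|²). -/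
open scoped BigOperators

/-! ### Auxiliary Fourier analysis on `ZMod N × ZMod N` -/

noncomputable def ee (N : ℕ) (m : ℤ) : ℂ := Complex.exp (2 * Real.pi * Complex.I * m / N)

lemma ee_add (N : ℕ) (a b : ℤ) : ee N (a + b) = ee N a * ee N b := by
  rw [ee, ee, ee, ← Complex.exp_add]; push_cast; ring_nf

lemma ee_zero (N : ℕ) : ee N 0 = 1 := by simp [ee]

lemma ee_mul_N (N : ℕ) (hN : N ≠ 0) (t : ℤ) : ee N (t * N) = 1 := by
  rw [ee]
  have h : (2 * Real.pi * Complex.I * ((t : ℤ) * (N:ℕ) : ℤ) / N : ℂ)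
      = t * (2 * Real.pi * Complex.I) := by
    have hNc : (N : ℂ) ≠ 0 := Nat.cast_ne_zero.mpr hN
    push_cast
    field_simp
  rw [h, Complex.exp_int_mul_two_pi_mul_I]

lemma ee_congr (N : ℕ) (hN : N ≠ 0) (a b : ℤ) (h : a % N = b % N) : ee N a = ee N b := by
  have ha : a = b + (a / N - b / N) * N := by
    have ha := Int.emod_add_mul_ediv a N
    have hb := Int.emod_add_mul_ediv b N
    nlinarith [ha, hb, h]
  rw [ha, ee_add, ee_mul_N N hN, mul_one]

lemma ee_conj (N : ℕ) (m : ℤ) : (starRingEnd ℂ) (ee N m) = ee N (-m) := by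
  rw [ee, ee, ← Complex.exp_conj]
  congr 1
  simp [Complex.ext_iff]

lemma ee_ne_one (N : ℕ) (hN : N ≠ 0) (m : ℤ) (h : ¬ (N:ℤ) ∣ m) : ee N m ≠ 1 := by
  intro hh
  rw [ee, Complex.exp_eq_one_iff] at hh
  obtain ⟨t, ht⟩ := hh
  apply h
  refine ⟨t, ?_⟩
  have hNc : (N : ℂ) ≠ 0 := Nat.cast_ne_zero.mpr hN
  have hpi : (Real.pi : ℂ) ≠ 0 := by exact_mod_cast Real.pi_ne_zero
  have h2 : (2 : ℂ) * Real.pi * Complex.I ≠ 0 := by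
    simp [hpi, Complex.I_ne_zero]
  have hmc : (m : ℂ) = t * N := by
    field_simp at ht
    have h3 : 2 * (Real.pi:ℂ) * Complex.I * (m:ℂ) = 2 * Real.pi * Complex.I * ((t:ℂ) * N) := by
      rw [ht]; ring
    exact mul_left_cancel₀ h2 h3
  have hmz : m = t * N := by exact_mod_cast hmc
  rw [hmz]; ring

section Char
variable (N : ℕ) [NeZero N]

noncomputable def e1 (k t : ZMod N) : ℂ := ee N ((k.val : ℤ) * (t.val : ℤ))

lemma zmod_cast_val (a : ZMod N) : ((a.val : ℤ) : ZMod N) = a := by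
  simp [ZMod.natCast_val, ZMod.intCast_zmod_cast]

lemma e1_intCast (k : ZMod N) (m : ℤ) : e1 N k ((m : ℤ) : ZMod N) = ee N (k.val * m) := by
  apply ee_congr N (NeZero.ne N)
  rw [ZMod.val_intCast]
  rw [Int.mul_emod, Int.emod_emod_of_dvd _ dvd_rfl, ← Int.mul_emod]

omit [NeZero N] in
lemma e1_comm (k t : ZMod N) : e1 N k t = e1 N t k := by rw [e1, e1, mul_comm]

lemma e1_add_right (k a b : ZMod N) : e1 N k (a + b) = e1 N k a * e1 N k b := by
  rw [e1, e1, e1, ← ee_add]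
  apply ee_congr N (NeZero.ne N)
  rw [ZMod.val_add]
  push_cast
  rw [← mul_add, Int.mul_emod, Int.emod_emod_of_dvd _ dvd_rfl, ← Int.mul_emod]

lemma e1_neg_right (k a : ZMod N) : e1 N k (-a) = (starRingEnd ℂ) (e1 N k a) := by
  have h : e1 N k ((-(a.val : ℤ) : ℤ) : ZMod N) = e1 N k (-a) := by
    congr 1
    push_cast
    simp [ZMod.natCast_val, ZMod.cast_id]
  rw [← h, e1_intCast, mul_neg, e1, ee_conj]

omit [NeZero N] in
lemma e1_zero_right (k : ZMod N) : e1 N k 0 = 1 := by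
  rw [e1]; simp [ee_zero]

lemma e1_sum (c : ZMod N) : ∑ k : ZMod N, e1 N k c = if c = 0 then (N : ℂ) else 0 := by
  by_cases hc : c = 0
  · simp [hc, e1_zero_right, ZMod.card]
  · simp only [hc, if_false]
    have key : (∑ k : ZMod N, e1 N k c) * e1 N (1 : ZMod N) c = ∑ k : ZMod N, e1 N k c := by
      rw [Finset.sum_mul]
      exact Fintype.sum_bijective (· + (1 : ZMod N)) (Equiv.addRight (1 : ZMod N)).bijective _ _
        (fun k => by
          rw [e1_comm N (k + 1) c, e1_add_right, e1_comm N c k, e1_comm N c 1])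
    have hne : e1 N (1 : ZMod N) c ≠ 1 := by
      have h1 : e1 N (1 : ZMod N) c = ee N (c.val : ℤ) := by
        rw [e1_comm, show (1 : ZMod N) = ((1:ℤ) : ZMod N) by norm_num, e1_intCast, mul_one]
      rw [h1]
      apply ee_ne_one N (NeZero.ne N)
      intro hdvd
      have hnat : N ∣ c.val := Int.ofNat_dvd.mp hdvd
      have hv : c.val < N := ZMod.val_lt c
      have hv0 : c.val ≠ 0 := fun h => hc ((ZMod.val_eq_zero c).mp h)
      have := Nat.le_of_dvd (Nat.pos_of_ne_zero hv0) hnat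
      omega
    have h0 : (∑ k : ZMod N, e1 N k c) * (e1 N (1 : ZMod N) c - 1) = 0 := by
      rw [mul_sub, key, mul_one, sub_self]
    rcases mul_eq_zero.mp h0 with h | h
    · exact h
    · exact absurd (sub_eq_zero.mp h) hne

/-- 2D character. -/
noncomputable def E2 (k t : ZMod N × ZMod N) : ℂ := e1 N k.1 t.1 * e1 N k.2 t.2

lemma E2_add_right (k a b : ZMod N × ZMod N) : E2 N k (a + b) = E2 N k a * E2 N k b := by
  simp only [E2, Prod.fst_add, Prod.snd_add, e1_add_right]; ring

lemma E2_conj (k a : ZMod N × ZMod N) : (starRingEnd ℂ) (E2 N k a) = E2 N k (-a) := by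
  simp only [E2, Prod.fst_neg, Prod.snd_neg, e1_neg_right, map_mul]

lemma E2_neg_comm (k h : ZMod N × ZMod N) : E2 N k (-h) = E2 N (-k) h := by
  simp only [E2, Prod.fst_neg, Prod.snd_neg]
  rw [e1_neg_right, e1_neg_right, e1_comm N (-k.1) h.1, e1_comm N (-k.2) h.2,
    e1_neg_right, e1_neg_right, e1_comm N k.1 h.1, e1_comm N k.2 h.2]

lemma E2_sum (c : ZMod N × ZMod N) :
    ∑ k : ZMod N × ZMod N, E2 N k c = if c = 0 then ((N : ℂ))^2 else 0 := by
  rw [Fintype.sum_prod_type]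
  simp only [E2]
  rw [← Finset.sum_mul_sum]
  rw [e1_sum, e1_sum]
  rcases eq_or_ne c 0 with h | h
  · simp [h, Prod.fst_zero, Prod.snd_zero, sq]
  · have : c.1 ≠ 0 ∨ c.2 ≠ 0 := by
      by_contra hcon
      push_neg at hcon
      exact h (Prod.ext hcon.1 hcon.2)
    rcases this with h1 | h1
    · rw [if_neg h1, zero_mul, if_neg h]
    · rw [if_neg h1, mul_zero, if_neg h]

/-- Fourier transform. -/
noncomputable def Ft (w : ZMod N × ZMod N → ℂ) (k : ZMod N × ZMod N) : ℂ :=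
  ∑ t : ZMod N × ZMod N, w t * E2 N k t

/-- Parseval. -/
lemma parseval (w : ZMod N × ZMod N → ℂ) :
    ∑ k : ZMod N × ZMod N, Complex.normSq (Ft N w k) =
      (N:ℝ)^2 * ∑ t : ZMod N × ZMod N, Complex.normSq (w t) := by
  have key : (↑(∑ k : ZMod N × ZMod N, Complex.normSq (Ft N w k)) : ℂ) =
      ((N:ℂ)^2 * ∑ t : ZMod N × ZMod N, Complex.normSq (w t) : ℂ) := by
    push_cast
    calc (∑ k : ZMod N × ZMod N, (Complex.normSq (Ft N w k) : ℂ))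
        = ∑ k : ZMod N × ZMod N, Ft N w k * (starRingEnd ℂ) (Ft N w k) := by
          simp [Complex.mul_conj]
      _ = ∑ k : ZMod N × ZMod N, ∑ t : ZMod N × ZMod N, ∑ s : ZMod N × ZMod N,
            w t * (starRingEnd ℂ) (w s) * (E2 N k t * (starRingEnd ℂ) (E2 N k s)) := by
          refine Finset.sum_congr rfl fun k _ => ?_
          rw [Ft, map_sum, Finset.sum_mul_sum]
          refine Finset.sum_congr rfl fun t _ => Finset.sum_congr rfl fun s _ => ?_
          rw [map_mul]; ring
      _ = ∑ t : ZMod N × ZMod N, ∑ s : ZMod N × ZMod N,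
            w t * (starRingEnd ℂ) (w s) * ∑ k : ZMod N × ZMod N, E2 N k (t - s) := by
          rw [Finset.sum_comm]
          refine Finset.sum_congr rfl fun t _ => ?_
          rw [Finset.sum_comm]
          refine Finset.sum_congr rfl fun s _ => ?_
          rw [Finset.mul_sum]
          refine Finset.sum_congr rfl fun k _ => ?_
          rw [E2_conj, ← E2_add_right, sub_eq_add_neg]
      _ = ∑ t : ZMod N × ZMod N, w t * (starRingEnd ℂ) (w t) * (N:ℂ)^2 := by
          refine Finset.sum_congr rfl fun t _ => ?_
          rw [Finset.sum_eq_single t]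
          · rw [E2_sum, if_pos (sub_self t)]
          · intro s _ hs
            rw [E2_sum, if_neg (fun hc => hs (sub_eq_zero.mp hc).symm), mul_zero]
          · intro ht; exact absurd (Finset.mem_univ t) ht
      _ = (N:ℂ)^2 * ∑ t : ZMod N × ZMod N, (Complex.normSq (w t) : ℂ) := by
          simp only [Complex.mul_conj]
          rw [← Finset.sum_mul, mul_comm]
  exact_mod_cast key

/-- Diagonalization of circulant action. -/
lemma circ_diag (c v : ZMod N × ZMod N → ℂ) (k : ZMod N × ZMod N) :
    Ft N (fun t => ∑ s : ZMod N × ZMod N, c (s - t) * v s) k =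
      (∑ h : ZMod N × ZMod N, c h * E2 N k (-h)) * Ft N v k := by
  rw [Ft, Ft]
  calc (∑ t, (∑ s, c (s - t) * v s) * E2 N k t)
      = ∑ s, ∑ t, c (s - t) * E2 N k t * v s := by
        rw [Finset.sum_comm]
        exact Finset.sum_congr rfl fun t _ => by
          rw [Finset.sum_mul]; exact Finset.sum_congr rfl fun s _ => by ring
    _ = ∑ s, (∑ h, c h * E2 N k (-h)) * (v s * E2 N k s) := by
        refine Finset.sum_congr rfl fun s _ => ?_
        rw [Finset.sum_mul]
        refine (Fintype.sum_bijective (fun h => s - h) (Equiv.subLeft s).bijective _ _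
          fun h => ?_).symm
        show c h * E2 N k (-h) * (v s * E2 N k s) = c (s - (s - h)) * E2 N k (s - h) * v s
        rw [show s - (s - h) = h by ring, sub_eq_add_neg s h, E2_add_right]
        ring
    _ = (∑ h, c h * E2 N k (-h)) * ∑ s, v s * E2 N k s := by rw [Finset.mul_sum]

end Char

/-! ### Matching `genPoly` with circulant eigenvalues -/

lemma valMinAbs_small (n : ℕ) (hn : 1 ≤ n) [NeZero (2*n-1)] (x : ℤ)
    (h1 : -(n:ℤ) + 1 ≤ x) (h2 : x ≤ (n:ℤ) - 1) :
    ((x : ZMod (2*n-1))).valMinAbs = x := by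
  rw [ZMod.valMinAbs_spec]
  refine ⟨rfl, ?_, ?_⟩
  · push_cast; omega
  · push_cast; omega

lemma cast_inj_icc (n : ℕ) (hn : 1 ≤ n) [NeZero (2*n-1)] :
    ∀ x ∈ Finset.Icc (-(n:ℤ) + 1) ((n:ℤ) - 1), ∀ y ∈ Finset.Icc (-(n:ℤ) + 1) ((n:ℤ) - 1),
      (x : ZMod (2*n-1)) = (y : ZMod (2*n-1)) → x = y := by
  intro x hx y hy hxy
  simp only [Finset.mem_Icc] at hx hy
  rw [← valMinAbs_small n hn x hx.1 hx.2, ← valMinAbs_small n hn y hy.1 hy.2, hxy]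

lemma icc_image_univ (n : ℕ) (hn : 1 ≤ n) [NeZero (2*n-1)] :
    (Finset.Icc (-(n:ℤ) + 1) ((n:ℤ) - 1)).image (fun x : ℤ => (x : ZMod (2*n-1))) =
      Finset.univ := by
  apply Finset.eq_univ_of_card
  rw [Finset.card_image_of_injOn (fun x hx y hy => cast_inj_icc n hn x hx y hy),
    Int.card_Icc, ZMod.card]
  omega

lemma sum_zmod_eq_icc (n : ℕ) (hn : 1 ≤ n) [NeZero (2*n-1)] {β : Type*} [AddCommMonoid β]
    (F : ZMod (2*n-1) → β) :
    ∑ m : ZMod (2*n-1), F m =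
      ∑ x ∈ Finset.Icc (-(n:ℤ) + 1) ((n:ℤ) - 1), F ((x : ZMod (2*n-1))) := by
  rw [← icc_image_univ n hn, Finset.sum_image (cast_inj_icc n hn)]

lemma exp_eq_e1 (n : ℕ) (hn : 1 ≤ n) [NeZero (2*n-1)] (a : ZMod (2*n-1)) (h : ℤ) :
    Complex.exp (Complex.I * ((h : ℂ) * ((2 * Real.pi * a.val / (2*n-1) : ℝ) : ℂ)))
      = e1 (2*n-1) a ((h : ℤ) : ZMod (2*n-1)) := by
  rw [e1_intCast, ee]
  congr 1
  push_cast [Nat.cast_sub (by omega : 1 ≤ 2*n)]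
  ring

lemma gen_match (n : ℕ) (hn : 1 ≤ n) [NeZero (2*n-1)] (d : ℤ → ℤ → ℝ)
    (k : ZMod (2*n-1) × ZMod (2*n-1)) :
    ∑ h : ZMod (2*n-1) × ZMod (2*n-1),
        ((d h.1.valMinAbs h.2.valMinAbs : ℝ) : ℂ) * E2 (2*n-1) k h =
      genPoly n d (2 * Real.pi * k.1.val / (2*n-1)) (2 * Real.pi * k.2.val / (2*n-1)) := by
  rw [genPoly, Fintype.sum_prod_type, sum_zmod_eq_icc n hn]
  refine Finset.sum_congr rfl fun h₁ hh₁ => ?_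
  rw [sum_zmod_eq_icc n hn]
  refine Finset.sum_congr rfl fun h₂ hh₂ => ?_
  simp only [Finset.mem_Icc] at hh₁ hh₂
  dsimp only
  rw [valMinAbs_small n hn h₁ hh₁.1 hh₁.2, valMinAbs_small n hn h₂ hh₂.1 hh₂.2]
  congr 1
  rw [mul_add, Complex.exp_add, exp_eq_e1 n hn k.1 h₁, exp_eq_e1 n hn k.2 h₂]
  rfl

/-! ### Bounds on the generating polynomial and suprema -/

lemma genPoly_abs_le (n : ℕ) (d : ℤ → ℤ → ℝ) (ω₁ ω₂ : ℝ) :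
    ‖genPoly n d ω₁ ω₂‖ ≤
      ∑ h₁ ∈ Finset.Icc (-(n : ℤ) + 1) ((n : ℤ) - 1),
        ∑ h₂ ∈ Finset.Icc (-(n : ℤ) + 1) ((n : ℤ) - 1), |d h₁ h₂| := by
  refine (norm_sum_le _ _).trans (Finset.sum_le_sum fun h₁ _ => ?_)
  refine (norm_sum_le _ _).trans (Finset.sum_le_sum fun h₂ _ => ?_)
  rw [norm_mul]
  have hexp : ‖Complex.exp (Complex.I * ((h₁ : ℂ) * (ω₁ : ℂ) + (h₂ : ℂ) * (ω₂ : ℂ)))‖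
      = 1 := by
    rw [show Complex.I * ((h₁ : ℂ) * (ω₁ : ℂ) + (h₂ : ℂ) * (ω₂ : ℂ))
        = ((h₁ * ω₁ + h₂ * ω₂ : ℝ) : ℂ) * Complex.I by push_cast; ring]
    exact Complex.norm_exp_ofReal_mul_I _
  rw [hexp, mul_one, Complex.norm_real, Real.norm_eq_abs]

lemma range_bdd (n cin : ℕ) (dd : Fin cin → ℤ → ℤ → ℝ) :
    BddAbove (Set.range fun ω : Set.Icc (0:ℝ) (2*Real.pi) × Set.Icc (0:ℝ) (2*Real.pi) =>
      ∑ i : Fin cin, ‖genPoly n (dd i) ω.1 ω.2‖ ^ 2) := by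
  refine ⟨∑ i : Fin cin, (∑ h₁ ∈ Finset.Icc (-(n : ℤ) + 1) ((n : ℤ) - 1),
    ∑ h₂ ∈ Finset.Icc (-(n : ℤ) + 1) ((n : ℤ) - 1), |dd i h₁ h₂|)^2, ?_⟩
  rintro x ⟨ω, rfl⟩
  refine Finset.sum_le_sum fun i _ => ?_
  exact pow_le_pow_left₀ (norm_nonneg _) (genPoly_abs_le n (dd i) _ _) 2

lemma zero_mem_icc : (0:ℝ) ∈ Set.Icc (0:ℝ) (2*Real.pi) :=
  ⟨le_refl 0, by positivity⟩

lemma sup_nonneg' (n cin : ℕ) (dd : Fin cin → ℤ → ℤ → ℝ) :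
    0 ≤ ⨆ ω : Set.Icc (0:ℝ) (2*Real.pi) × Set.Icc (0:ℝ) (2*Real.pi),
      ∑ i : Fin cin, ‖genPoly n (dd i) ω.1 ω.2‖ ^ 2 := by
  refine le_ciSup_of_le (range_bdd n cin dd) ⟨⟨0, zero_mem_icc⟩, ⟨0, zero_mem_icc⟩⟩ ?_
  positivity

lemma omega_mem (N : ℕ) [NeZero N] (a : ZMod N) :
    2 * Real.pi * a.val / N ∈ Set.Icc (0:ℝ) (2*Real.pi) := by
  have hN : (0:ℝ) < N := by
    have := Nat.pos_of_ne_zero (NeZero.ne N)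
    exact_mod_cast this
  constructor
  · positivity
  · rw [div_le_iff₀ hN]
    have hval : (a.val : ℝ) ≤ N := by exact_mod_cast (ZMod.val_lt a).le
    nlinarith [Real.pi_pos]

/-! ### Sums over injections -/

lemma sum_inj_eq {α β : Type*} [Fintype α] [Fintype β] [DecidableEq β] {f : α → β}
    (hf : Function.Injective f) {M : Type*} [AddCommMonoid M] (g : β → M)
    (h0 : ∀ b, b ∉ Set.range f → g b = 0) : ∑ b, g b = ∑ a, g (f a) := by
  rw [← Finset.sum_image (f := g) (g := f) (fun x _ y _ h => hf h)]
  refine (Finset.sum_subset (Finset.subset_univ _) ?_).symm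
  intro b _ hb
  refine h0 b fun hr => hb ?_
  obtain ⟨a, ha⟩ := hr
  exact Finset.mem_image.mpr ⟨a, Finset.mem_univ a, ha⟩

lemma sum_inj_le {α β : Type*} [Fintype α] [Fintype β] [DecidableEq β] {f : α → β}
    (hf : Function.Injective f) (g : β → ℝ) (hg : ∀ b, 0 ≤ g b) :
    ∑ a, g (f a) ≤ ∑ b, g b := by
  rw [← Finset.sum_image (f := g) (g := f) (fun x _ y _ h => hf h)]
  exact Finset.sum_le_sum_of_subset_of_nonneg (Finset.subset_univ _) fun b _ _ => hg b

/-- Cauchy–Schwarz for complex sums. -/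
lemma cs_complex {ι : Type*} [Fintype ι] (a b : ι → ℂ) :
    Complex.normSq (∑ j, a j * b j) ≤ (∑ j, Complex.normSq (a j)) * ∑ j, Complex.normSq (b j) := by
  simp only [← Complex.sq_norm]
  calc ‖∑ j, a j * b j‖ ^ 2
      ≤ (∑ j, ‖a j‖ * ‖b j‖) ^ 2 := by
        apply pow_le_pow_left₀ (norm_nonneg _)
        refine (norm_sum_le _ _).trans ?_
        exact le_of_eq (Finset.sum_congr rfl fun j _ => norm_mul _ _)
    _ ≤ (∑ j, ‖a j‖ ^ 2) * ∑ j, ‖b j‖ ^ 2 :=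
        Finset.sum_mul_sq_le_sq_mul_sq _ _ _

/-! ### Embedding of `Fin n` into `ZMod (2n-1)` -/

lemma emb_inj (n : ℕ) (hn : 1 ≤ n) [NeZero (2*n-1)] :
    Function.Injective (fun p : Fin n × Fin n =>
      (((p.1 : ℕ) : ZMod (2*n-1)), ((p.2 : ℕ) : ZMod (2*n-1)))) := by
  intro p q h
  rw [Prod.ext_iff] at h
  obtain ⟨h1, h2⟩ := h
  have e1' := congrArg ZMod.val h1
  have e2' := congrArg ZMod.val h2
  rw [ZMod.val_cast_of_lt (lt_of_lt_of_le p.1.is_lt (by omega)),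
    ZMod.val_cast_of_lt (lt_of_lt_of_le q.1.is_lt (by omega))] at e1'
  rw [ZMod.val_cast_of_lt (lt_of_lt_of_le p.2.is_lt (by omega)),
    ZMod.val_cast_of_lt (lt_of_lt_of_le q.2.is_lt (by omega))] at e2'
  exact Prod.ext (Fin.ext e1') (Fin.ext e2')

lemma emb_diff (n : ℕ) (hn : 1 ≤ n) [NeZero (2*n-1)] (a b : Fin n) :
    (((b : ℕ) : ZMod (2*n-1)) - ((a : ℕ) : ZMod (2*n-1))).valMinAbs = (b : ℤ) - (a : ℤ) := by
  have h : ((b : ℕ) : ZMod (2*n-1)) - ((a : ℕ) : ZMod (2*n-1))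
      = ((((b : ℤ) - (a : ℤ)) : ℤ) : ZMod (2*n-1)) := by push_cast; ring
  have hb : (b : ℤ) < n := by exact_mod_cast b.is_lt
  have ha : (a : ℤ) < n := by exact_mod_cast a.is_lt
  have hb0 : (0:ℤ) ≤ (b : ℤ) := Int.ofNat_nonneg _
  have ha0 : (0:ℤ) ≤ (a : ℤ) := Int.ofNat_nonneg _
  rw [h, valMinAbs_small n hn _ (by omega) (by omega)]

/-! ### The main estimate -/

lemma main_bound_s12 (n cin cout : ℕ) (hn : 1 ≤ n) [NeZero (2*n-1)]
    (d : Fin cin → Fin cout → ℤ → ℤ → ℝ) (v : Fin cout × (Fin n × Fin n) → ℂ)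
    (hv : ∑ x : Fin cout × (Fin n × Fin n), Complex.normSq (v x) ≤ 1) :
    ∑ i : Fin cin, ∑ p : Fin n × Fin n,
      Complex.normSq (∑ x : Fin cout × (Fin n × Fin n), dbToep n (d i x.1) p x.2 * v x) ≤
    ∑ j : Fin cout,
      ⨆ ω : Set.Icc (0 : ℝ) (2 * Real.pi) × Set.Icc (0 : ℝ) (2 * Real.pi),
        ∑ i : Fin cin, ‖genPoly n (d i j) ω.1 ω.2‖ ^ 2 := by
  set S := ∑ j : Fin cout,
      ⨆ ω : Set.Icc (0 : ℝ) (2 * Real.pi) × Set.Icc (0 : ℝ) (2 * Real.pi),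
        ∑ i : Fin cin, ‖genPoly n (d i j) ω.1 ω.2‖ ^ 2 with hS
  have hS0 : 0 ≤ S := Finset.sum_nonneg fun j _ => sup_nonneg' n cin (fun i => d i j)
  set ι0 : Fin n × Fin n → ZMod (2*n-1) × ZMod (2*n-1) :=
    fun p => (((p.1 : ℕ) : ZMod (2*n-1)), ((p.2 : ℕ) : ZMod (2*n-1))) with hι0
  have hι : Function.Injective ι0 := emb_inj n hn
  set w : Fin cout → ZMod (2*n-1) × ZMod (2*n-1) → ℂ :=
    fun j => Function.extend ι0 (fun q => v (j, q)) 0 with hw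
  set cc : Fin cin → Fin cout → ZMod (2*n-1) × ZMod (2*n-1) → ℂ :=
    fun i j h => ((d i j h.1.valMinAbs h.2.valMinAbs : ℝ) : ℂ) with hcc
  set u : Fin cin → ZMod (2*n-1) × ZMod (2*n-1) → ℂ :=
    fun i t => ∑ j : Fin cout, ∑ s : ZMod (2*n-1) × ZMod (2*n-1), cc i j (s - t) * w j s with hu
  have hw_app : ∀ j q, w j (ι0 q) = v (j, q) := fun j q => hι.extend_apply _ _ q
  have hw_zero : ∀ j t, t ∉ Set.range ι0 → w j t = 0 := by
    intro j t ht
    rw [hw]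
    exact Function.extend_apply' _ _ _ (fun hex => ht hex)
  -- Step 1: the Toeplitz image agrees with the circulant image on embedded points
  have step1 : ∀ (i : Fin cin) (p : Fin n × Fin n),
      (∑ x : Fin cout × (Fin n × Fin n), dbToep n (d i x.1) p x.2 * v x) = u i (ι0 p) := by
    intro i p
    rw [Fintype.sum_prod_type, hu]
    refine Finset.sum_congr rfl fun j _ => ?_
    rw [sum_inj_eq hι (fun s => cc i j (s - ι0 p) * w j s)
      (fun s hs => by simp only [hw_zero j s hs, mul_zero])]
    refine Finset.sum_congr rfl fun q _ => ?_
    rw [hw_app]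
    congr 1
    rw [hcc]
    simp only [dbToep, Matrix.of_apply, hι0, Prod.fst_sub, Prod.snd_sub]
    rw [emb_diff n hn, emb_diff n hn]
  have step2 : ∑ i : Fin cin, ∑ p : Fin n × Fin n, Complex.normSq (u i (ι0 p)) ≤
      ∑ i : Fin cin, ∑ t : ZMod (2*n-1) × ZMod (2*n-1), Complex.normSq (u i t) :=
    Finset.sum_le_sum fun i _ =>
      sum_inj_le hι (fun t => Complex.normSq (u i t)) (fun t => Complex.normSq_nonneg _)
  -- Step 3: diagonalization
  have step3 : ∀ (i : Fin cin) (k : ZMod (2*n-1) × ZMod (2*n-1)),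
      Ft (2*n-1) (u i) k =
        ∑ j : Fin cout,
          genPoly n (d i j) (2*Real.pi*((-k).1.val)/(2*n-1)) (2*Real.pi*((-k).2.val)/(2*n-1))
            * Ft (2*n-1) (w j) k := by
    intro i k
    have hlin : Ft (2*n-1) (u i) k =
        ∑ j : Fin cout, Ft (2*n-1) (fun t => ∑ s, cc i j (s - t) * w j s) k := by
      rw [Ft]
      simp only [hu, Ft]
      rw [Finset.sum_comm]
      exact Finset.sum_congr rfl fun t _ => by rw [Finset.sum_mul]
    rw [hlin]
    refine Finset.sum_congr rfl fun j _ => ?_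
    rw [circ_diag]
    congr 1
    rw [show (∑ h, cc i j h * E2 (2*n-1) k (-h))
        = ∑ h, cc i j h * E2 (2*n-1) (-k) h from
      Finset.sum_congr rfl fun h _ => by rw [E2_neg_comm]]
    exact gen_match n hn (d i j) (-k)
  -- Step 4: Cauchy-Schwarz and the supremum bound
  have step4 : ∀ k : ZMod (2*n-1) × ZMod (2*n-1),
      ∑ i : Fin cin, Complex.normSq (Ft (2*n-1) (u i) k) ≤
        S * ∑ j : Fin cout, Complex.normSq (Ft (2*n-1) (w j) k) := by
    intro k
    have hT0 : 0 ≤ ∑ j : Fin cout, Complex.normSq (Ft (2*n-1) (w j) k) :=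
      Finset.sum_nonneg fun j _ => Complex.normSq_nonneg _
    calc ∑ i : Fin cin, Complex.normSq (Ft (2*n-1) (u i) k)
        = ∑ i : Fin cin, Complex.normSq (∑ j : Fin cout,
            genPoly n (d i j) (2*Real.pi*((-k).1.val)/(2*n-1)) (2*Real.pi*((-k).2.val)/(2*n-1))
              * Ft (2*n-1) (w j) k) := by
          exact Finset.sum_congr rfl fun i _ => by rw [step3 i k]
      _ ≤ ∑ i : Fin cin, (∑ j : Fin cout, Complex.normSq
            (genPoly n (d i j) (2*Real.pi*((-k).1.val)/(2*n-1)) (2*Real.pi*((-k).2.val)/(2*n-1))))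
            * ∑ j : Fin cout, Complex.normSq (Ft (2*n-1) (w j) k) :=
          Finset.sum_le_sum fun i _ => cs_complex _ _
      _ = (∑ i : Fin cin, ∑ j : Fin cout, Complex.normSq
            (genPoly n (d i j) (2*Real.pi*((-k).1.val)/(2*n-1)) (2*Real.pi*((-k).2.val)/(2*n-1))))
            * ∑ j : Fin cout, Complex.normSq (Ft (2*n-1) (w j) k) := by
          rw [← Finset.sum_mul]
      _ ≤ S * ∑ j : Fin cout, Complex.normSq (Ft (2*n-1) (w j) k) := by
          refine mul_le_mul_of_nonneg_right ?_ hT0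
          rw [Finset.sum_comm, hS]
          refine Finset.sum_le_sum fun j _ => ?_
          have hcast : ((2*n-1:ℕ):ℝ) = 2*(n:ℝ)-1 := by
            push_cast [Nat.cast_sub (by omega : 1 ≤ 2*n)]
            ring
          have hmem : ∀ a : ZMod (2*n-1),
              2*Real.pi*(a.val:ℝ)/(2*(n:ℝ)-1) ∈ Set.Icc (0:ℝ) (2*Real.pi) := by
            intro a
            have hm := omega_mem (2*n-1) a
            rwa [hcast] at hm
          have := le_ciSup (range_bdd n cin (fun i => d i j))
            (⟨⟨2*Real.pi*((-k).1.val)/(2*(n:ℝ)-1), hmem (-k).1⟩,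
              ⟨2*Real.pi*((-k).2.val)/(2*(n:ℝ)-1), hmem (-k).2⟩⟩ :
              Set.Icc (0 : ℝ) (2 * Real.pi) × Set.Icc (0 : ℝ) (2 * Real.pi))
          refine le_trans (le_of_eq ?_) this
          simp only [← Complex.sq_norm]
  -- Step 5: energy of the lifted vector
  have step5 : ∑ k : ZMod (2*n-1) × ZMod (2*n-1), ∑ j : Fin cout,
      Complex.normSq (Ft (2*n-1) (w j) k) =
      ((2*n-1:ℕ):ℝ)^2 * ∑ x : Fin cout × (Fin n × Fin n), Complex.normSq (v x) := by
    rw [Finset.sum_comm, Fintype.sum_prod_type, Finset.mul_sum]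
    refine Finset.sum_congr rfl fun j _ => ?_
    rw [parseval (2*n-1) (w j)]
    congr 1
    rw [sum_inj_eq hι (fun t => Complex.normSq (w j t))
      (fun t ht => by simp only [hw_zero j t ht, Complex.normSq_zero])]
    exact Finset.sum_congr rfl fun q _ => by rw [hw_app]
  -- Combine everything
  have hN2 : (0:ℝ) < ((2*n-1:ℕ):ℝ)^2 := by
    have : (0:ℝ) < ((2*n-1:ℕ):ℝ) := by exact_mod_cast Nat.pos_of_ne_zero (by omega)
    positivity
  have chain : ((2*n-1:ℕ):ℝ)^2 * (∑ i : Fin cin, ∑ t : ZMod (2*n-1) × ZMod (2*n-1),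
      Complex.normSq (u i t)) ≤ ((2*n-1:ℕ):ℝ)^2 * S := by
    calc ((2*n-1:ℕ):ℝ)^2 * (∑ i : Fin cin, ∑ t, Complex.normSq (u i t))
        = ∑ i : Fin cin, ((2*n-1:ℕ):ℝ)^2 * ∑ t, Complex.normSq (u i t) := Finset.mul_sum _ _ _
      _ = ∑ i : Fin cin, ∑ k, Complex.normSq (Ft (2*n-1) (u i) k) :=
          Finset.sum_congr rfl fun i _ => (parseval (2*n-1) (u i)).symm
      _ = ∑ k, ∑ i : Fin cin, Complex.normSq (Ft (2*n-1) (u i) k) := Finset.sum_comm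
      _ ≤ ∑ k, S * ∑ j : Fin cout, Complex.normSq (Ft (2*n-1) (w j) k) :=
          Finset.sum_le_sum fun k _ => step4 k
      _ = S * ∑ k, ∑ j : Fin cout, Complex.normSq (Ft (2*n-1) (w j) k) :=
          (Finset.mul_sum _ _ _).symm
      _ = S * (((2*n-1:ℕ):ℝ)^2 * ∑ x : Fin cout × (Fin n × Fin n), Complex.normSq (v x)) := by
          rw [step5]
      _ ≤ ((2*n-1:ℕ):ℝ)^2 * S := by nlinarith [mul_le_mul_of_nonneg_left (mul_le_mul_of_nonneg_left hv hS0) hN2.le]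
  have hfin : ∑ i : Fin cin, ∑ p : Fin n × Fin n, Complex.normSq (u i (ι0 p)) ≤ S := by
    have h2 := le_trans (mul_le_mul_of_nonneg_left step2 hN2.le) chain
    exact le_of_mul_le_mul_left h2 hN2
  refine le_trans (le_of_eq ?_) hfin
  exact Finset.sum_congr rfl fun i _ => Finset.sum_congr rfl fun p _ => by rw [step1 i p]

/-- LipBound. -/
theorem conv_sval_bound (n cin cout : ℕ) (d : Fin cin → Fin cout → ℤ → ℤ → ℝ) :
    sval1 (Matrix.of fun (p : Fin cin × (Fin n × Fin n)) (q : Fin cout × (Fin n × Fin n)) =>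
        dbToep n (d p.1 q.1) p.2 q.2) ≤
      Real.sqrt (∑ j : Fin cout,
        ⨆ ω : Set.Icc (0 : ℝ) (2 * Real.pi) × Set.Icc (0 : ℝ) (2 * Real.pi),
          ∑ i : Fin cin, ‖genPoly n (d i j) ω.1 ω.2‖ ^ 2) := by
  rw [sval1]
  haveI : Nonempty {v : (Fin cout × (Fin n × Fin n)) → ℂ // vnorm v ≤ 1} :=
    ⟨⟨0, by simp [vnorm]⟩⟩
  refine ciSup_le ?_
  rintro ⟨v, hv⟩
  rcases Nat.eq_zero_or_pos n with hn0 | hn1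
  · subst hn0
    have hz : vnorm ((Matrix.of fun (p : Fin cin × (Fin 0 × Fin 0))
        (q : Fin cout × (Fin 0 × Fin 0)) => dbToep 0 (d p.1 q.1) p.2 q.2).mulVec v) = 0 := by
      rw [vnorm, Finset.univ_eq_empty, Finset.sum_empty, Real.sqrt_zero]
    rw [hz]
    exact Real.sqrt_nonneg _
  · haveI : NeZero (2*n-1) := ⟨by omega⟩
    have hv' : ∑ x : Fin cout × (Fin n × Fin n), Complex.normSq (v x) ≤ 1 := by
      have h1 : vnorm v ≤ 1 := hv
      rw [vnorm] at h1
      have h2 : ∑ i, ‖v i‖ ^ 2 = ∑ x, Complex.normSq (v x) := by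
        exact Finset.sum_congr rfl fun x _ => Complex.sq_norm _
      rw [h2] at h1
      have h3 : 0 ≤ ∑ x, Complex.normSq (v x) :=
        Finset.sum_nonneg fun x _ => Complex.normSq_nonneg _
      nlinarith [Real.sq_sqrt h3, Real.sqrt_nonneg (∑ x, Complex.normSq (v x))]
    have key := main_bound_s12 n cin cout hn1 d v hv'
    have hMv : vnorm ((Matrix.of fun (p : Fin cin × (Fin n × Fin n))
        (q : Fin cout × (Fin n × Fin n)) => dbToep n (d p.1 q.1) p.2 q.2).mulVec v) =
        Real.sqrt (∑ i : Fin cin, ∑ p : Fin n × Fin n,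
          Complex.normSq (∑ x : Fin cout × (Fin n × Fin n), dbToep n (d i x.1) p x.2 * v x)) := by
      rw [vnorm]
      congr 1
      rw [Fintype.sum_prod_type]
      refine Finset.sum_congr rfl fun i _ => Finset.sum_congr rfl fun p _ => ?_
      rw [Complex.sq_norm]
      congr 1
    rw [hMv]
    exact Real.sqrt_le_sqrt key
end

section
/- Decreasing the spectral norms of individual layers does not necessarily decrease the global Lipschitz constant of a ReLU network: there exist 2-layer ReLU networks N₁(x) = A⁽²⁾ρ(A⁽¹⁾x) and N₂(x) = B⁽²⁾ρ(B⁽¹⁾x) in dimension 2 with ‖B⁽¹⁾‖₂ ≤ ‖A⁽¹⁾‖₂ and ‖B⁽²⁾‖₂ > ‖A⁽²⁾‖₂, such that Lip(N₂) < Lip(N₁). Concretely, with A⁽¹⁾ = [[0,−1],[−1,0]], A⁽²⁾ = [[−1,−1],[−1,0]], B⁽¹⁾ = [[0,0],[0,−1]], B⁽²⁾ = [[−1,−1],[−1,−1]], one has Lip(N₁) = (1+√5)/2 and Lip(N₂) = √2. -/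
open scoped BigOperators

/-- Euclidean norm of a real vector. -/
noncomputable def rvnorm {ι : Type*} [Fintype ι] (v : ι → ℝ) : ℝ :=
  Real.sqrt (∑ i, v i ^ 2)

/-- Largest singular value (spectral norm) of a real matrix. -/
noncomputable def rsval1 {ι κ : Type*} [Fintype ι] [Fintype κ] (A : Matrix ι κ ℝ) : ℝ :=
  ⨆ v : {v : κ → ℝ // rvnorm v ≤ 1}, rvnorm (A.mulVec v.1)

/-- Coordinatewise ReLU. -/
def relu {ι : Type*} (v : ι → ℝ) : ι → ℝ := fun i => max 0 (v i)

/-- Euclidean Lipschitz constant of a map `ℝ² → ℝ²`. -/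
noncomputable def lipConst (f : (Fin 2 → ℝ) → (Fin 2 → ℝ)) : ℝ :=
  sSup {r : ℝ | ∃ x y : Fin 2 → ℝ, x ≠ y ∧ r = rvnorm (f x - f y) / rvnorm (x - y)}

/- ### Auxiliary lemmas -/

lemma rvnorm_two (v : Fin 2 → ℝ) : rvnorm v = Real.sqrt (v 0 ^ 2 + v 1 ^ 2) := by
  simp [rvnorm, Fin.sum_univ_two]

lemma keyineq (u w p q : ℝ) (hu : u^2 ≤ q^2) (hw : w^2 ≤ p^2) :
    2*u^2 + 2*u*w + w^2 ≤ ((1+Real.sqrt 5)/2)^2 * (p^2+q^2) := by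
  set c := Real.sqrt 5 with hcdef
  have hc : c^2 = 5 := Real.sq_sqrt (by norm_num)
  have hc2 : 2 ≤ c := by nlinarith [Real.sqrt_nonneg 5]
  have h1 : 2*u*w ≤ ((c-1)/2)*u^2 + ((1+c)/2)*w^2 := by
    have h2 : (2*(c-1)) * (2*u*w) ≤ (2*(c-1)) * (((c-1)/2)*u^2 + ((1+c)/2)*w^2) := by
      nlinarith [sq_nonneg ((c-1)*u - 2*w)]
    exact le_of_mul_le_mul_left h2 (by linarith)
  nlinarith [h1, mul_nonneg (by linarith : (0:ℝ) ≤ 3+c) (by linarith : 0 ≤ q^2 - u^2),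
    mul_nonneg (by linarith : (0:ℝ) ≤ 3+c) (by linarith : 0 ≤ p^2 - w^2)]

lemma relu_sq (a b : ℝ) : (max 0 a - max 0 b)^2 ≤ (a-b)^2 := by
  have h : |max 0 a - max 0 b| ≤ |a - b| := by
    simpa [max_comm] using abs_max_sub_max_le_abs a b 0
  nlinarith [sq_abs (max 0 a - max 0 b), sq_abs (a-b),
    abs_nonneg (max 0 a - max 0 b), abs_nonneg (a-b)]

lemma sqrt_div_le {a b L : ℝ} (hb : 0 < b) (hL : 0 ≤ L) (h : a ≤ L^2 * b) :
    Real.sqrt a / Real.sqrt b ≤ L := by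
  rw [div_le_iff₀ (Real.sqrt_pos.mpr hb)]
  calc Real.sqrt a ≤ Real.sqrt (L^2*b) := Real.sqrt_le_sqrt h
  _ = L * Real.sqrt b := by rw [Real.sqrt_mul (sq_nonneg L), Real.sqrt_sq hL]

lemma sqrt_div_eq {a b L : ℝ} (hb : 0 < b) (hL : 0 ≤ L) (h : a = L^2 * b) :
    Real.sqrt a / Real.sqrt b = L := by
  rw [h, Real.sqrt_mul (sq_nonneg L), Real.sqrt_sq hL, mul_div_assoc,
    div_self (ne_of_gt (Real.sqrt_pos.mpr hb)), mul_one]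

lemma rvnorm_sub_pos {x y : Fin 2 → ℝ} (hxy : x ≠ y) :
    0 < (x 0 - y 0)^2 + (x 1 - y 1)^2 := by
  have h : x 0 ≠ y 0 ∨ x 1 ≠ y 1 := by
    by_contra h; push_neg at h
    exact hxy (funext fun i => by fin_cases i <;> simp [h.1, h.2])
  rcases h with h | h
  · have hne : x 0 - y 0 ≠ 0 := sub_ne_zero.mpr h
    have h0 : 0 < (x 0 - y 0)^2 := by positivity
    nlinarith [sq_nonneg (x 1 - y 1)]
  · have hne : x 1 - y 1 ≠ 0 := sub_ne_zero.mpr h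
    have h0 : 0 < (x 1 - y 1)^2 := by positivity
    nlinarith [sq_nonneg (x 0 - y 0)]

lemma f1_apply (x : Fin 2 → ℝ) :
    (!![-1,-1;-1,0] : Matrix (Fin 2) (Fin 2) ℝ).mulVec
      (relu ((!![0,-1;-1,0] : Matrix (Fin 2) (Fin 2) ℝ).mulVec x)) =
      ![-(max 0 (-(x 1))) - max 0 (-(x 0)), -(max 0 (-(x 1)))] := by
  funext i; fin_cases i <;>
    simp [Matrix.mulVec, dotProduct, Fin.sum_univ_two, relu] <;> ring

lemma f2_apply (x : Fin 2 → ℝ) :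
    (!![-1,-1;-1,-1] : Matrix (Fin 2) (Fin 2) ℝ).mulVec
      (relu ((!![0,0;0,-1] : Matrix (Fin 2) (Fin 2) ℝ).mulVec x)) =
      ![-(max 0 (-(x 1))), -(max 0 (-(x 1)))] := by
  funext i; fin_cases i <;>
    simp [Matrix.mulVec, dotProduct, Fin.sum_univ_two, relu]

lemma sqrt5_sq : (Real.sqrt 5)^2 = 5 := Real.sq_sqrt (by norm_num)
lemma sqrt5_ge : (2:ℝ) ≤ Real.sqrt 5 := by nlinarith [Real.sqrt_nonneg 5, sqrt5_sq]
lemma sqrt5_lt : Real.sqrt 5 < 3 := by nlinarith [Real.sqrt_nonneg 5, sqrt5_sq]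
lemma phi_nonneg : (0:ℝ) ≤ (1 + Real.sqrt 5)/2 := by nlinarith [sqrt5_ge]

/-- Upper bound on the ratio for network 1. -/
lemma f1_ratio_le (x y : Fin 2 → ℝ) (hxy : x ≠ y) :
    rvnorm ((!![-1,-1;-1,0] : Matrix (Fin 2) (Fin 2) ℝ).mulVec
        (relu ((!![0,-1;-1,0] : Matrix (Fin 2) (Fin 2) ℝ).mulVec x)) -
      (!![-1,-1;-1,0] : Matrix (Fin 2) (Fin 2) ℝ).mulVec
        (relu ((!![0,-1;-1,0] : Matrix (Fin 2) (Fin 2) ℝ).mulVec y))) / rvnorm (x - y)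
      ≤ (1 + Real.sqrt 5)/2 := by
  rw [f1_apply, f1_apply, rvnorm_two, rvnorm_two]
  have hu : (max 0 (-(x 1)) - max 0 (-(y 1)))^2 ≤ (x 1 - y 1)^2 := by
    nlinarith [relu_sq (-(x 1)) (-(y 1))]
  have hw : (max 0 (-(x 0)) - max 0 (-(y 0)))^2 ≤ (x 0 - y 0)^2 := by
    nlinarith [relu_sq (-(x 0)) (-(y 0))]
  have hk := keyineq (max 0 (-(x 1)) - max 0 (-(y 1))) (max 0 (-(x 0)) - max 0 (-(y 0)))
    (x 0 - y 0) (x 1 - y 1) hu hw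
  have hb : 0 < ((x-y) 0)^2 + ((x-y) 1)^2 := by
    simpa [Pi.sub_apply] using rvnorm_sub_pos hxy
  apply sqrt_div_le hb phi_nonneg
  have e0 : (![-(max 0 (-(x 1))) - max 0 (-(x 0)), -(max 0 (-(x 1)))] -
      ![-(max 0 (-(y 1))) - max 0 (-(y 0)), -(max 0 (-(y 1)))]) 0 =
      -(max 0 (-(x 1)) - max 0 (-(y 1))) - (max 0 (-(x 0)) - max 0 (-(y 0))) := by
    simp only [Pi.sub_apply, Matrix.cons_val_zero]; ring
  have e1 : (![-(max 0 (-(x 1))) - max 0 (-(x 0)), -(max 0 (-(x 1)))] -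
      ![-(max 0 (-(y 1))) - max 0 (-(y 0)), -(max 0 (-(y 1)))]) 1 =
      -(max 0 (-(x 1)) - max 0 (-(y 1))) := by
    simp only [Pi.sub_apply, Matrix.cons_val_one, Matrix.head_cons, Matrix.cons_val_zero]; ring
  have e2 : ((x-y) 0) = x 0 - y 0 := rfl
  have e3 : ((x-y) 1) = x 1 - y 1 := rfl
  rw [e0, e1, e2, e3]
  nlinarith [hk]

/-- Upper bound on the ratio for network 2. -/
lemma f2_ratio_le (x y : Fin 2 → ℝ) (hxy : x ≠ y) :
    rvnorm ((!![-1,-1;-1,-1] : Matrix (Fin 2) (Fin 2) ℝ).mulVec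
        (relu ((!![0,0;0,-1] : Matrix (Fin 2) (Fin 2) ℝ).mulVec x)) -
      (!![-1,-1;-1,-1] : Matrix (Fin 2) (Fin 2) ℝ).mulVec
        (relu ((!![0,0;0,-1] : Matrix (Fin 2) (Fin 2) ℝ).mulVec y))) / rvnorm (x - y)
      ≤ Real.sqrt 2 := by
  rw [f2_apply, f2_apply, rvnorm_two, rvnorm_two]
  have hu : (max 0 (-(x 1)) - max 0 (-(y 1)))^2 ≤ (x 1 - y 1)^2 := by
    nlinarith [relu_sq (-(x 1)) (-(y 1))]
  have hb : 0 < ((x-y) 0)^2 + ((x-y) 1)^2 := by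
    simpa [Pi.sub_apply] using rvnorm_sub_pos hxy
  apply sqrt_div_le hb (Real.sqrt_nonneg 2)
  have e0 : (![-(max 0 (-(x 1))), -(max 0 (-(x 1)))] -
      ![-(max 0 (-(y 1))), -(max 0 (-(y 1)))]) 0 =
      -(max 0 (-(x 1)) - max 0 (-(y 1))) := by
    simp only [Pi.sub_apply, Matrix.cons_val_zero]; ring
  have e1 : (![-(max 0 (-(x 1))), -(max 0 (-(x 1)))] -
      ![-(max 0 (-(y 1))), -(max 0 (-(y 1)))]) 1 =
      -(max 0 (-(x 1)) - max 0 (-(y 1))) := by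
    simp only [Pi.sub_apply, Matrix.cons_val_one, Matrix.head_cons, Matrix.cons_val_zero]; ring
  have e2 : ((x-y) 0) = x 0 - y 0 := rfl
  have e3 : ((x-y) 1) = x 1 - y 1 := rfl
  rw [e0, e1, e2, e3]
  have h2 : (Real.sqrt 2)^2 = 2 := Real.sq_sqrt (by norm_num)
  nlinarith [hu, sq_nonneg (x 0 - y 0)]

lemma phi_sq : ((1 + Real.sqrt 5)/2)^2 = (1 + Real.sqrt 5)/2 + 1 := by
  linear_combination (1/4) * sqrt5_sq

/-- The ratio for the first network attains `(1+√5)/2`. -/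
lemma f1_witness :
    rvnorm ((!![-1,-1;-1,0] : Matrix (Fin 2) (Fin 2) ℝ).mulVec
        (relu ((!![0,-1;-1,0] : Matrix (Fin 2) (Fin 2) ℝ).mulVec 0)) -
      (!![-1,-1;-1,0] : Matrix (Fin 2) (Fin 2) ℝ).mulVec
        (relu ((!![0,-1;-1,0] : Matrix (Fin 2) (Fin 2) ℝ).mulVec
          ![-1, -((1 + Real.sqrt 5)/2)]))) /
      rvnorm ((0 : Fin 2 → ℝ) - ![-1, -((1 + Real.sqrt 5)/2)]) = (1 + Real.sqrt 5)/2 := by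
  set p : ℝ := (1 + Real.sqrt 5)/2 with hp
  rw [f1_apply, f1_apply, rvnorm_two, rvnorm_two]
  have hx1 : ((0 : Fin 2 → ℝ) 1) = 0 := rfl
  have hx0 : ((0 : Fin 2 → ℝ) 0) = 0 := rfl
  have hy1 : (![(-1 : ℝ), -p] 1) = -p := rfl
  have hy0 : (![(-1 : ℝ), -p] 0) = -1 := rfl
  have hm0 : max 0 (-(0:ℝ)) = 0 := by norm_num
  have hmp : max 0 (-(-p)) = p := by rw [neg_neg]; exact max_eq_right phi_nonneg
  have hm1 : max 0 (-(-1:ℝ)) = 1 := by norm_num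
  have e0 : (![-(max 0 (-((0 : Fin 2 → ℝ) 1))) - max 0 (-((0 : Fin 2 → ℝ) 0)),
        -(max 0 (-((0 : Fin 2 → ℝ) 1)))] -
      ![-(max 0 (-(![(-1:ℝ), -p] 1))) - max 0 (-(![(-1:ℝ), -p] 0)),
        -(max 0 (-(![(-1:ℝ), -p] 1)))]) 0 = p + 1 := by
    simp only [Pi.sub_apply, Matrix.cons_val_zero, hx1, hx0, hy1, hy0, hm0, hmp, hm1]; ring
  have e1 : (![-(max 0 (-((0 : Fin 2 → ℝ) 1))) - max 0 (-((0 : Fin 2 → ℝ) 0)),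
        -(max 0 (-((0 : Fin 2 → ℝ) 1)))] -
      ![-(max 0 (-(![(-1:ℝ), -p] 1))) - max 0 (-(![(-1:ℝ), -p] 0)),
        -(max 0 (-(![(-1:ℝ), -p] 1)))]) 1 = p := by
    simp only [Pi.sub_apply, Matrix.cons_val_one, Matrix.head_cons, Matrix.cons_val_zero, hx1, hy1, hm0, hmp]; ring
  have d0 : (((0 : Fin 2 → ℝ) - ![-1, -p]) 0) = 1 := by
    simp only [Pi.sub_apply, hx0, hy0]; ring
  have d1 : (((0 : Fin 2 → ℝ) - ![-1, -p]) 1) = p := by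
    simp only [Pi.sub_apply, hx1, hy1]; ring
  rw [e0, e1, d0, d1]
  have hb : (0:ℝ) < 1^2 + p^2 := by positivity
  apply sqrt_div_eq hb phi_nonneg
  have h2 : p^2 = p + 1 := phi_sq
  linear_combination (-(p + 1 + p^2)) * h2

/-- The ratio for the second network attains `√2`. -/
lemma f2_witness :
    rvnorm ((!![-1,-1;-1,-1] : Matrix (Fin 2) (Fin 2) ℝ).mulVec
        (relu ((!![0,0;0,-1] : Matrix (Fin 2) (Fin 2) ℝ).mulVec 0)) -
      (!![-1,-1;-1,-1] : Matrix (Fin 2) (Fin 2) ℝ).mulVec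
        (relu ((!![0,0;0,-1] : Matrix (Fin 2) (Fin 2) ℝ).mulVec ![0, -1]))) /
      rvnorm ((0 : Fin 2 → ℝ) - ![0, -1]) = Real.sqrt 2 := by
  rw [f2_apply, f2_apply, rvnorm_two, rvnorm_two]
  have hx1 : ((0 : Fin 2 → ℝ) 1) = 0 := rfl
  have hy1 : (![(0:ℝ), -1] 1) = -1 := rfl
  have hm0 : max 0 (-(0:ℝ)) = 0 := by norm_num
  have hm1 : max 0 (-(-1:ℝ)) = 1 := by norm_num
  have e0 : (![-(max 0 (-((0 : Fin 2 → ℝ) 1))), -(max 0 (-((0 : Fin 2 → ℝ) 1)))] -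
      ![-(max 0 (-(![(0:ℝ), -1] 1))), -(max 0 (-(![(0:ℝ), -1] 1)))]) 0 = 1 := by
    simp only [Pi.sub_apply, Matrix.cons_val_zero, hx1, hy1, hm0, hm1]; ring
  have e1 : (![-(max 0 (-((0 : Fin 2 → ℝ) 1))), -(max 0 (-((0 : Fin 2 → ℝ) 1)))] -
      ![-(max 0 (-(![(0:ℝ), -1] 1))), -(max 0 (-(![(0:ℝ), -1] 1)))]) 1 = 1 := by
    simp only [Pi.sub_apply, Matrix.cons_val_one, Matrix.head_cons, Matrix.cons_val_zero, hx1, hy1, hm0, hm1]; ring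
  have d0 : (((0 : Fin 2 → ℝ) - ![(0:ℝ), -1]) 0) = 0 := by
    simp only [Pi.sub_apply]; norm_num
  have d1 : (((0 : Fin 2 → ℝ) - ![(0:ℝ), -1]) 1) = 1 := by
    simp only [Pi.sub_apply, hx1, hy1]; ring
  rw [e0, e1, d0, d1]
  have hb : (0:ℝ) < 0^2 + 1^2 := by norm_num
  apply sqrt_div_eq hb (Real.sqrt_nonneg 2)
  rw [Real.sq_sqrt (by norm_num : (0:ℝ) ≤ 2)]; norm_num

lemma sval_B1_le : rsval1 (!![0,0;0,-1] : Matrix (Fin 2) (Fin 2) ℝ) ≤ 1 := by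
  haveI : Nonempty {v : Fin 2 → ℝ // rvnorm v ≤ 1} :=
    ⟨⟨0, by rw [rvnorm_two]; norm_num⟩⟩
  apply ciSup_le
  rintro ⟨v, hv⟩
  have hmv : (!![0,0;0,-1] : Matrix (Fin 2) (Fin 2) ℝ).mulVec v = ![0, -(v 1)] := by
    funext i; fin_cases i <;> simp [Matrix.mulVec, dotProduct, Fin.sum_univ_two]
  rw [hmv, rvnorm_two]
  simp only [Matrix.cons_val_zero, Matrix.cons_val_one, Matrix.head_cons]
  calc Real.sqrt ((0:ℝ)^2 + (-(v 1))^2) ≤ Real.sqrt (v 0^2 + v 1^2) :=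
        Real.sqrt_le_sqrt (by nlinarith [sq_nonneg (v 0)])
    _ = rvnorm v := (rvnorm_two v).symm
    _ ≤ 1 := hv

lemma sval_A1_ge : (1:ℝ) ≤ rsval1 (!![0,-1;-1,0] : Matrix (Fin 2) (Fin 2) ℝ) := by
  have hbdd : BddAbove (Set.range fun v : {v : Fin 2 → ℝ // rvnorm v ≤ 1} =>
      rvnorm ((!![0,-1;-1,0] : Matrix (Fin 2) (Fin 2) ℝ).mulVec v.1)) := by
    refine ⟨1, ?_⟩
    rintro r ⟨⟨v, hv⟩, rfl⟩
    have hmv : (!![0,-1;-1,0] : Matrix (Fin 2) (Fin 2) ℝ).mulVec v = ![-(v 1), -(v 0)] := by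
      funext i; fin_cases i <;> simp [Matrix.mulVec, dotProduct, Fin.sum_univ_two]
    show rvnorm _ ≤ 1
    rw [hmv, rvnorm_two]
    simp only [Matrix.cons_val_zero, Matrix.cons_val_one, Matrix.head_cons]
    calc Real.sqrt ((-(v 1))^2 + (-(v 0))^2) = Real.sqrt (v 0^2 + v 1^2) := by ring_nf
      _ = rvnorm v := (rvnorm_two v).symm
      _ ≤ 1 := hv
  have hel : rvnorm ((!![0,-1;-1,0] : Matrix (Fin 2) (Fin 2) ℝ).mulVec ![1, 0]) = 1 := by
    have hmv : (!![0,-1;-1,0] : Matrix (Fin 2) (Fin 2) ℝ).mulVec ![1, 0] = ![0, -1] := by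
      funext i; fin_cases i <;> simp [Matrix.mulVec, dotProduct, Fin.sum_univ_two]
    rw [hmv, rvnorm_two]; norm_num
  have hv1 : rvnorm (![1, 0] : Fin 2 → ℝ) ≤ 1 := by rw [rvnorm_two]; norm_num
  have := le_ciSup hbdd (⟨![1, 0], hv1⟩ : {v : Fin 2 → ℝ // rvnorm v ≤ 1})
  rw [hel] at this
  exact this

lemma sval_A2_le : rsval1 (!![-1,-1;-1,0] : Matrix (Fin 2) (Fin 2) ℝ) ≤ (1 + Real.sqrt 5)/2 := by
  haveI : Nonempty {v : Fin 2 → ℝ // rvnorm v ≤ 1} :=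
    ⟨⟨0, by rw [rvnorm_two]; norm_num⟩⟩
  apply ciSup_le
  rintro ⟨v, hv⟩
  have hmv : (!![-1,-1;-1,0] : Matrix (Fin 2) (Fin 2) ℝ).mulVec v = ![-(v 0) - v 1, -(v 0)] := by
    funext i; fin_cases i <;> (simp [Matrix.mulVec, dotProduct, Fin.sum_univ_two]; try ring)
  rw [rvnorm_two] at hv
  have hs : v 0^2 + v 1^2 ≤ 1 := by
    nlinarith [Real.sq_sqrt (show (0:ℝ) ≤ v 0^2 + v 1^2 by positivity),
      Real.sqrt_nonneg (v 0^2 + v 1^2)]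
  have hk := keyineq (v 0) (v 1) (v 1) (v 0) le_rfl le_rfl
  rw [hmv, rvnorm_two]
  simp only [Matrix.cons_val_zero, Matrix.cons_val_one, Matrix.head_cons]
  calc Real.sqrt ((-(v 0) - v 1)^2 + (-(v 0))^2)
      ≤ Real.sqrt (((1 + Real.sqrt 5)/2)^2) := by
        apply Real.sqrt_le_sqrt
        nlinarith [hk, mul_le_mul_of_nonneg_left hs (sq_nonneg ((1 + Real.sqrt 5)/2))]
    _ = (1 + Real.sqrt 5)/2 := Real.sqrt_sq phi_nonneg

lemma sval_B2_ge : (2:ℝ) ≤ rsval1 (!![-1,-1;-1,-1] : Matrix (Fin 2) (Fin 2) ℝ) := by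
  have h2 : (Real.sqrt 2)^2 = 2 := Real.sq_sqrt (by norm_num)
  have hbdd : BddAbove (Set.range fun v : {v : Fin 2 → ℝ // rvnorm v ≤ 1} =>
      rvnorm ((!![-1,-1;-1,-1] : Matrix (Fin 2) (Fin 2) ℝ).mulVec v.1)) := by
    refine ⟨2, ?_⟩
    rintro r ⟨⟨v, hv⟩, rfl⟩
    have hmv : (!![-1,-1;-1,-1] : Matrix (Fin 2) (Fin 2) ℝ).mulVec v =
        ![-(v 0) - v 1, -(v 0) - v 1] := by
      funext i; fin_cases i <;> (simp [Matrix.mulVec, dotProduct, Fin.sum_univ_two]; try ring)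
    show rvnorm _ ≤ 2
    rw [rvnorm_two] at hv
    have hs : v 0^2 + v 1^2 ≤ 1 := by
      nlinarith [Real.sq_sqrt (show (0:ℝ) ≤ v 0^2 + v 1^2 by positivity),
        Real.sqrt_nonneg (v 0^2 + v 1^2)]
    rw [hmv, rvnorm_two]
    simp only [Matrix.cons_val_zero, Matrix.cons_val_one, Matrix.head_cons]
    calc Real.sqrt ((-(v 0) - v 1)^2 + (-(v 0) - v 1)^2)
        ≤ Real.sqrt (2^2) := Real.sqrt_le_sqrt (by nlinarith [sq_nonneg (v 0 - v 1)])
      _ = 2 := Real.sqrt_sq (by norm_num)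
  set v : Fin 2 → ℝ := ![-(Real.sqrt 2)/2, -(Real.sqrt 2)/2] with hvdef
  have hv0 : v 0 = -(Real.sqrt 2)/2 := rfl
  have hv1 : v 1 = -(Real.sqrt 2)/2 := rfl
  have hv : rvnorm v ≤ 1 := by
    rw [rvnorm_two, hv0, hv1]
    have : (-(Real.sqrt 2)/2)^2 + (-(Real.sqrt 2)/2)^2 = 1 := by
      linear_combination (1/2) * h2
    rw [this, Real.sqrt_one]
  have hel : rvnorm ((!![-1,-1;-1,-1] : Matrix (Fin 2) (Fin 2) ℝ).mulVec v) = 2 := by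
    have hmv : (!![-1,-1;-1,-1] : Matrix (Fin 2) (Fin 2) ℝ).mulVec v =
        ![Real.sqrt 2, Real.sqrt 2] := by
      funext i; fin_cases i <;>
        (simp [hvdef, Matrix.mulVec, dotProduct, Fin.sum_univ_two]; ring)
    rw [hmv, rvnorm_two]
    simp only [Matrix.cons_val_zero, Matrix.cons_val_one, Matrix.head_cons]
    rw [h2, show (2:ℝ) + 2 = 2^2 by norm_num, Real.sqrt_sq (by norm_num : (0:ℝ) ≤ 2)]
  have := le_ciSup hbdd (⟨v, hv⟩ : {v : Fin 2 → ℝ // rvnorm v ≤ 1})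
  rw [hel] at this
  exact this

/-- Decreasing the spectral norms of individual layers need not decrease the global
    Lipschitz constant of a ReLU network: with the concrete matrices below,
    `‖B⁽¹⁾‖₂ ≤ ‖A⁽¹⁾‖₂` and `‖A⁽²⁾‖₂ < ‖B⁽²⁾‖₂`, yet
    `Lip(N₂) = √2 < (1+√5)/2 = Lip(N₁)`. -/
theorem layerwise_lipschitz_not_global :
    ∃ A1 A2 B1 B2 : Matrix (Fin 2) (Fin 2) ℝ,
      A1 = !![0, -1; -1, 0] ∧ A2 = !![-1, -1; -1, 0] ∧
      B1 = !![0, 0; 0, -1] ∧ B2 = !![-1, -1; -1, -1] ∧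
      rsval1 B1 ≤ rsval1 A1 ∧ rsval1 A2 < rsval1 B2 ∧
      lipConst (fun x => A2.mulVec (relu (A1.mulVec x))) = (1 + Real.sqrt 5) / 2 ∧
      lipConst (fun x => B2.mulVec (relu (B1.mulVec x))) = Real.sqrt 2 ∧
      lipConst (fun x => B2.mulVec (relu (B1.mulVec x))) <
        lipConst (fun x => A2.mulVec (relu (A1.mulVec x))) := by
  have hphi2 : (1 + Real.sqrt 5)/2 < 2 := by nlinarith [sqrt5_lt]
  have hlip1 : lipConst (fun x => (!![-1,-1;-1,0] : Matrix (Fin 2) (Fin 2) ℝ).mulVec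
      (relu ((!![0,-1;-1,0] : Matrix (Fin 2) (Fin 2) ℝ).mulVec x))) = (1 + Real.sqrt 5)/2 := by
    have hne : (0 : Fin 2 → ℝ) ≠ ![-1, -((1 + Real.sqrt 5)/2)] := by
      intro h
      have h0 := congrFun h 0
      norm_num at h0
    have hub : ∀ r ∈ {r : ℝ | ∃ x y : Fin 2 → ℝ, x ≠ y ∧
        r = rvnorm ((fun x => (!![-1,-1;-1,0] : Matrix (Fin 2) (Fin 2) ℝ).mulVec
          (relu ((!![0,-1;-1,0] : Matrix (Fin 2) (Fin 2) ℝ).mulVec x))) x -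
          (fun x => (!![-1,-1;-1,0] : Matrix (Fin 2) (Fin 2) ℝ).mulVec
          (relu ((!![0,-1;-1,0] : Matrix (Fin 2) (Fin 2) ℝ).mulVec x))) y) / rvnorm (x - y)},
        r ≤ (1 + Real.sqrt 5)/2 := by
      rintro r ⟨x, y, hxy, rfl⟩
      exact f1_ratio_le x y hxy
    have hmem : (1 + Real.sqrt 5)/2 ∈ {r : ℝ | ∃ x y : Fin 2 → ℝ, x ≠ y ∧
        r = rvnorm ((fun x => (!![-1,-1;-1,0] : Matrix (Fin 2) (Fin 2) ℝ).mulVec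
          (relu ((!![0,-1;-1,0] : Matrix (Fin 2) (Fin 2) ℝ).mulVec x))) x -
          (fun x => (!![-1,-1;-1,0] : Matrix (Fin 2) (Fin 2) ℝ).mulVec
          (relu ((!![0,-1;-1,0] : Matrix (Fin 2) (Fin 2) ℝ).mulVec x))) y) / rvnorm (x - y)} :=
      ⟨0, ![-1, -((1 + Real.sqrt 5)/2)], hne, f1_witness.symm⟩
    exact le_antisymm (csSup_le ⟨_, hmem⟩ hub) (le_csSup ⟨_, hub⟩ hmem)
  have hlip2 : lipConst (fun x => (!![-1,-1;-1,-1] : Matrix (Fin 2) (Fin 2) ℝ).mulVec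
      (relu ((!![0,0;0,-1] : Matrix (Fin 2) (Fin 2) ℝ).mulVec x))) = Real.sqrt 2 := by
    have hne : (0 : Fin 2 → ℝ) ≠ ![0, -1] := by
      intro h
      have h0 := congrFun h 1
      norm_num at h0
    have hub : ∀ r ∈ {r : ℝ | ∃ x y : Fin 2 → ℝ, x ≠ y ∧
        r = rvnorm ((fun x => (!![-1,-1;-1,-1] : Matrix (Fin 2) (Fin 2) ℝ).mulVec
          (relu ((!![0,0;0,-1] : Matrix (Fin 2) (Fin 2) ℝ).mulVec x))) x -
          (fun x => (!![-1,-1;-1,-1] : Matrix (Fin 2) (Fin 2) ℝ).mulVec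
          (relu ((!![0,0;0,-1] : Matrix (Fin 2) (Fin 2) ℝ).mulVec x))) y) / rvnorm (x - y)},
        r ≤ Real.sqrt 2 := by
      rintro r ⟨x, y, hxy, rfl⟩
      exact f2_ratio_le x y hxy
    have hmem : Real.sqrt 2 ∈ {r : ℝ | ∃ x y : Fin 2 → ℝ, x ≠ y ∧
        r = rvnorm ((fun x => (!![-1,-1;-1,-1] : Matrix (Fin 2) (Fin 2) ℝ).mulVec
          (relu ((!![0,0;0,-1] : Matrix (Fin 2) (Fin 2) ℝ).mulVec x))) x -
          (fun x => (!![-1,-1;-1,-1] : Matrix (Fin 2) (Fin 2) ℝ).mulVec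
          (relu ((!![0,0;0,-1] : Matrix (Fin 2) (Fin 2) ℝ).mulVec x))) y) / rvnorm (x - y)} :=
      ⟨0, ![0, -1], hne, f2_witness.symm⟩
    exact le_antisymm (csSup_le ⟨_, hmem⟩ hub) (le_csSup ⟨_, hub⟩ hmem)
  refine ⟨!![0,-1;-1,0], !![-1,-1;-1,0], !![0,0;0,-1], !![-1,-1;-1,-1],
    rfl, rfl, rfl, rfl, le_trans sval_B1_le sval_A1_ge,
    lt_of_le_of_lt sval_A2_le (lt_of_lt_of_le hphi2 sval_B2_ge), hlip1, hlip2, ?_⟩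
  rw [hlip1, hlip2]
  nlinarith [Real.sq_sqrt (show (0:ℝ) ≤ 2 by norm_num), Real.sqrt_nonneg 2,
    sqrt5_ge, sq_nonneg (Real.sqrt 2 - 3/2)]
end
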